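/- arXiv:2208.00905 — 7 statements merged into one kernel-verified Lean document; each statement's English description precedes it below -/
import Mathlib

section
/- Let {u_k}_{k=0}^{N-1} be any input sequence, x_0 ∈ ℝ^n any initial state, and {y_k}_{k=0}^{N-1} the resulting output of the system. Then for every k with n ≤ k ≤ N−1, M u_{[k−n,k]} = Σ_{j=0}^n d_j y_{k−j}. -/
open Matrix Finset

noncomputable def stateSeq {n m : ℕ} (A : Matrix (Fin n) (Fin n) ℝ) (B : Matrix (Fin n) (Fin m) ℝ)
    (x0 : Fin n → ℝ) (u : ℕ → Fin m → ℝ) : ℕ → Fin n → ℝ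
  | 0 => x0
  | k + 1 => A.mulVec (stateSeq A B x0 u k) + B.mulVec (u k)

/-- Output sequence `y_k = C x_k + D u_k` of the LTI system started at `x0` with input `u`. -/
noncomputable def outputSeq {n m p : ℕ} (A : Matrix (Fin n) (Fin n) ℝ) (B : Matrix (Fin n) (Fin m) ℝ)
    (C : Matrix (Fin p) (Fin n) ℝ) (D : Matrix (Fin p) (Fin m) ℝ)
    (x0 : Fin n → ℝ) (u : ℕ → Fin m → ℝ) (k : ℕ) : Fin p → ℝ :=
  C.mulVec (stateSeq A B x0 u k) + D.mulVec (u k)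

/-- Markov parameters: `Γ_0 = D`, `Γ_j = C A^(j-1) B` for `j ≥ 1`. -/
noncomputable def Markov {n m p : ℕ} (A : Matrix (Fin n) (Fin n) ℝ) (B : Matrix (Fin n) (Fin m) ℝ)
    (C : Matrix (Fin p) (Fin n) ℝ) (D : Matrix (Fin p) (Fin m) ℝ) : ℕ → Matrix (Fin p) (Fin m) ℝ
  | 0 => D
  | j + 1 => C * A ^ j * B

/-- The matrix `M = [M_n ⋯ M_1 M_0]` with `M_j = ∑_{q=0}^j d_{j-q} Γ_q`; the block at
block-column `i` (from the left, `i = 0,…,n`) is `M_{n-i}`. -/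
noncomputable def Mmat {n m p : ℕ} (A : Matrix (Fin n) (Fin n) ℝ) (B : Matrix (Fin n) (Fin m) ℝ)
    (C : Matrix (Fin p) (Fin n) ℝ) (D : Matrix (Fin p) (Fin m) ℝ) (d : ℕ → ℝ) :
    Matrix (Fin p) (Fin (n + 1) × Fin m) ℝ :=
  Matrix.of fun i jl =>
    (∑ q ∈ Finset.range ((n - (jl.1 : ℕ)) + 1),
      d ((n - (jl.1 : ℕ)) - q) • Markov A B C D q) i jl.2

lemma sum_mulVec' {p r : ℕ} {ι : Type*} (s : Finset ι) (M : ι → Matrix (Fin p) (Fin r) ℝ)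
    (v : Fin r → ℝ) : (∑ i ∈ s, M i).mulVec v = ∑ i ∈ s, (M i).mulVec v := by
  classical
  induction s using Finset.induction_on with
  | empty => simp
  | insert _ _ h ih => simp [Finset.sum_insert h, Matrix.add_mulVec, ih]

lemma mulVec_sum' {p r : ℕ} {ι : Type*} (s : Finset ι) (M : Matrix (Fin p) (Fin r) ℝ)
    (v : ι → Fin r → ℝ) : M.mulVec (∑ i ∈ s, v i) = ∑ i ∈ s, M.mulVec (v i) := by
  classical
  induction s using Finset.induction_on with
  | empty => simp
  | insert _ _ h ih => simp [Finset.sum_insert h, Matrix.mulVec_add, ih]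

lemma state_formula {n m : ℕ} (A : Matrix (Fin n) (Fin n) ℝ) (B : Matrix (Fin n) (Fin m) ℝ)
    (x0 : Fin n → ℝ) (u : ℕ → Fin m → ℝ) (a t : ℕ) :
    stateSeq A B x0 u (a + t) =
      (A ^ t).mulVec (stateSeq A B x0 u a) +
        ∑ q ∈ Finset.range t, (A ^ (t - 1 - q) * B).mulVec (u (a + q)) := by
  induction t with
  | zero => simp
  | succ t ih =>
    have : a + (t + 1) = (a + t) + 1 := by ring
    rw [this]
    show A.mulVec (stateSeq A B x0 u (a + t)) + B.mulVec (u (a + t)) = _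
    rw [ih, Matrix.mulVec_add, Matrix.mulVec_mulVec, ← pow_succ']
    rw [Finset.sum_range_succ]
    have h1 : (t + 1 - 1 - t : ℕ) = 0 := by omega
    rw [h1, pow_zero, Matrix.one_mul]
    have h2 : A.mulVec (∑ q ∈ Finset.range t, (A ^ (t - 1 - q) * B).mulVec (u (a + q)))
        = ∑ q ∈ Finset.range t, (A ^ (t + 1 - 1 - q) * B).mulVec (u (a + q)) := by
      rw [mulVec_sum']
      refine Finset.sum_congr rfl fun q hq => ?_
      have he : t - 1 - q + 1 = t + 1 - 1 - q := by
        have := Finset.mem_range.mp hq; omega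
      rw [Matrix.mulVec_mulVec, ← Matrix.mul_assoc, ← pow_succ', he]
    rw [h2]
    abel

lemma swap_triangle {p : ℕ} (n : ℕ) (F : ℕ → ℕ → Fin p → ℝ) :
    ∑ j ∈ Finset.range (n + 1), ∑ q ∈ Finset.range (n - j + 1), F j q
      = ∑ q ∈ Finset.range (n + 1), ∑ j ∈ Finset.range (n - q + 1), F j q := by
  have key : ∀ (G : ℕ → ℕ → Fin p → ℝ) (j : ℕ), j ∈ Finset.range (n + 1) →
      ∑ q ∈ Finset.range (n - j + 1), G j q
        = ∑ q ∈ Finset.range (n + 1), if j + q ≤ n then G j q else 0 := by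
    intro G j hj
    have hj' : j ≤ n := by have := Finset.mem_range.mp hj; omega
    have hsub : Finset.range (n - j + 1) ⊆ Finset.range (n + 1) :=
      Finset.range_subset_range.mpr (by omega)
    calc ∑ q ∈ Finset.range (n - j + 1), G j q
        = ∑ q ∈ Finset.range (n - j + 1), (if j + q ≤ n then G j q else 0) := by
          refine Finset.sum_congr rfl fun q hq => ?_
          have := Finset.mem_range.mp hq
          rw [if_pos (by omega)]
      _ = ∑ q ∈ Finset.range (n + 1), (if j + q ≤ n then G j q else 0) := by
          refine Finset.sum_subset hsub fun q hq hq' => ?_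
          have h1 := Finset.mem_range.mp hq
          have h2 : ¬ (q < n - j + 1) := fun h => hq' (Finset.mem_range.mpr h)
          rw [if_neg (by omega)]
  calc ∑ j ∈ Finset.range (n + 1), ∑ q ∈ Finset.range (n - j + 1), F j q
      = ∑ j ∈ Finset.range (n + 1), ∑ q ∈ Finset.range (n + 1),
          (if j + q ≤ n then F j q else 0) := Finset.sum_congr rfl (key F)
    _ = ∑ q ∈ Finset.range (n + 1), ∑ j ∈ Finset.range (n + 1),
          (if j + q ≤ n then F j q else 0) := Finset.sum_comm
    _ = ∑ q ∈ Finset.range (n + 1), ∑ j ∈ Finset.range (n - q + 1), F j q := by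
        refine Finset.sum_congr rfl fun q hq => ?_
        rw [key (fun q j => F j q) q hq]
        refine Finset.sum_congr rfl fun j hj => ?_
        rw [Nat.add_comm q j]

/-- for any input `u`, any initial state `x0`, with output `y`, for every
`k` with `n ≤ k ≤ N-1` we have `M u_{[k-n,k]} = ∑_{j=0}^n d_j y_{k-j}`. -/
theorem stmt_0 {n m p : ℕ} (hn : 0 < n) (hm : 0 < m) (hp : 0 < p)
    (A : Matrix (Fin n) (Fin n) ℝ) (B : Matrix (Fin n) (Fin m) ℝ)
    (C : Matrix (Fin p) (Fin n) ℝ) (D : Matrix (Fin p) (Fin m) ℝ)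
    (d : ℕ → ℝ) (hd0 : d 0 ≠ 0)
    (hdnorm : ∑ j ∈ Finset.range (n + 1), d j ^ 2 = 1)
    (hCayley : ∑ j ∈ Finset.range (n + 1), d j • A ^ (n - j) = 0)
    (N : ℕ) (u : ℕ → Fin m → ℝ) (x0 : Fin n → ℝ)
    (k : ℕ) (hk : n ≤ k) (hkN : k ≤ N - 1) :
    (Mmat A B C D d).mulVec (fun il : Fin (n + 1) × Fin m => u (k - n + (il.1 : ℕ)) il.2) =
      ∑ j ∈ Finset.range (n + 1), d j • outputSeq A B C D x0 u (k - j) := by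
  set s : ℕ := k - n with hs
  set xs : Fin n → ℝ := stateSeq A B x0 u s with hxs
  -- reflection identity for the blocks
  have hreflect : ∀ T : ℕ, ∑ q ∈ Finset.range (T + 1), d (T - q) • Markov A B C D q
      = ∑ j ∈ Finset.range (T + 1), d j • Markov A B C D (T - j) := by
    intro T
    rw [← Finset.sum_range_reflect (fun j => d j • Markov A B C D (T - j)) (T + 1)]
    refine Finset.sum_congr rfl fun q hq => ?_
    have hq' := Finset.mem_range.mp hq
    have h1 : T + 1 - 1 - q = T - q := by omega
    have h2 : T - (T - q) = q := by omega
    rw [h1, h2]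
  -- LHS as a sum of block matrix-vector products
  have hL : (Mmat A B C D d).mulVec
        (fun il : Fin (n + 1) × Fin m => u (k - n + (il.1 : ℕ)) il.2)
      = ∑ q ∈ Finset.range (n + 1),
          (∑ j ∈ Finset.range (n - q + 1), d j • Markov A B C D (n - q - j)).mulVec
            (u (s + q)) := by
    funext i
    rw [Finset.sum_apply]
    simp only [Matrix.mulVec, dotProduct, Mmat, Matrix.of_apply,
      Fintype.sum_prod_type]
    rw [← Fin.sum_univ_eq_sum_range (fun x =>
      ∑ l : Fin m, (∑ j ∈ Finset.range (n - x + 1),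
        d j • Markov A B C D (n - x - j)) i l * u (s + x) l) (n + 1)]
    refine Finset.sum_congr rfl fun x _ => ?_
    rw [← hreflect (n - (x : ℕ))]
  rw [hL]
  -- rewrite each output term
  have hout : ∀ j ∈ Finset.range (n + 1),
      d j • outputSeq A B C D x0 u (k - j)
        = d j • ((C * A ^ (n - j)).mulVec xs)
          + ∑ q ∈ Finset.range (n - j + 1),
              d j • ((Markov A B C D (n - j - q)).mulVec (u (s + q))) := by
    intro j hj
    have hj' : j ≤ n := by have := Finset.mem_range.mp hj; omega
    have hkj : k - j = s + (n - j) := by omega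
    rw [outputSeq, hkj, state_formula, Matrix.mulVec_add, mulVec_sum',
      Matrix.mulVec_mulVec]
    have hterm : ∀ q ∈ Finset.range (n - j),
        C.mulVec ((A ^ (n - j - 1 - q) * B).mulVec (u (s + q)))
          = (Markov A B C D (n - j - q)).mulVec (u (s + q)) := by
      intro q hq
      have hq' := Finset.mem_range.mp hq
      have : n - j - q = (n - j - 1 - q) + 1 := by omega
      rw [this, Matrix.mulVec_mulVec]
      show ((C * (A ^ (n - j - 1 - q) * B)).mulVec (u (s + q))) = _
      rw [← Matrix.mul_assoc]
      rfl
    rw [Finset.sum_congr rfl hterm]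
    have hD : (Markov A B C D 0).mulVec (u (s + (n - j))) = D.mulVec (u (s + (n - j))) := rfl
    rw [Finset.sum_range_succ]
    have hlast : n - j - (n - j) = 0 := by omega
    rw [hlast, hD]
    simp only [smul_add, Finset.smul_sum]
    abel
  rw [Finset.sum_congr rfl hout, Finset.sum_add_distrib]
  -- Cayley–Hamilton kills the state term
  have hzero : ∑ j ∈ Finset.range (n + 1), d j • ((C * A ^ (n - j)).mulVec xs) = 0 := by
    have h1 : ∑ j ∈ Finset.range (n + 1), d j • ((C * A ^ (n - j)).mulVec xs)
        = (∑ j ∈ Finset.range (n + 1), d j • (C * A ^ (n - j))).mulVec xs := by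
      rw [sum_mulVec']
      exact Finset.sum_congr rfl fun j _ => (Matrix.smul_mulVec _ _ _).symm
    have h2 : ∑ j ∈ Finset.range (n + 1), d j • (C * A ^ (n - j))
        = C * ∑ j ∈ Finset.range (n + 1), d j • A ^ (n - j) := by
      rw [Matrix.mul_sum]
      exact Finset.sum_congr rfl fun j _ => (Matrix.mul_smul _ _ _).symm
    rw [h1, h2, hCayley, Matrix.mul_zero, Matrix.zero_mulVec]
  rw [hzero, zero_add]
  -- swap the double sum and push mulVec through
  rw [swap_triangle n (fun j q => d j • ((Markov A B C D (n - j - q)).mulVec (u (s + q))))]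
  refine (Finset.sum_congr rfl fun q hq => ?_).symm
  rw [sum_mulVec']
  refine Finset.sum_congr rfl fun j hj => ?_
  have h3 : n - q - j = n - j - q := by omega
  rw [Matrix.smul_mulVec, h3]
end

section
/- If the input sequence {u_k}_{k=0}^{N−1} is K_u-PE of order n+1 for some symmetric positive definite K_u ∈ ℝ^{m(n+1)×m(n+1)}, then for every system (A,B,C,D) that is output reachable (i.e., Γ has full row rank p) and every initial state x_0 ∈ ℝ^n, the output sequence {y_k}_{k=0}^{N−1} generated from x_0 under u satisfies Σ_{k=0}^{N−1} y_k y_k^T ⪰ (1/(n+1)) M K_u M^T, and the matrix K_y = (1/(n+1)) M K_u M^T is positive definite; that is, the output is K_y-PE of order 1. -/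
open Matrix Finset

/-- The matrix `Γ = [Γ_0 Γ_1 ⋯ Γ_n]`. -/
noncomputable def Gammamat {n m p : ℕ} (A : Matrix (Fin n) (Fin n) ℝ) (B : Matrix (Fin n) (Fin m) ℝ)
    (C : Matrix (Fin p) (Fin n) ℝ) (D : Matrix (Fin p) (Fin m) ℝ) :
    Matrix (Fin p) (Fin (n + 1) × Fin m) ℝ :=
  Matrix.of fun i jl => Markov A B C D (jl.1 : ℕ) i jl.2

section Helpers

theorem mv_sum' {α ι κ : Type*} [Fintype ι] [Fintype κ] (A : Matrix ι κ ℝ) (f : α → κ → ℝ) (s : Finset α) :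
    A *ᵥ (∑ j ∈ s, f j) = ∑ j ∈ s, A *ᵥ f j := by
  ext i
  simp [Matrix.mulVec, dotProduct, Finset.mul_sum]
  rw [Finset.sum_comm]

theorem sum_mv' {α ι κ : Type*} [Fintype ι] [Fintype κ] (M : α → Matrix ι κ ℝ) (s : Finset α) (v : κ → ℝ) :
    (∑ j ∈ s, M j) *ᵥ v = ∑ j ∈ s, M j *ᵥ v := by
  ext i
  simp [Matrix.mulVec, dotProduct, Matrix.sum_apply, Finset.sum_mul]
  rw [Finset.sum_comm]

theorem dp_sum' {α κ : Type*} [Fintype κ] (x : κ → ℝ) (f : α → κ → ℝ) (s : Finset α) :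
    x ⬝ᵥ (∑ j ∈ s, f j) = ∑ j ∈ s, x ⬝ᵥ f j := by
  simp [dotProduct, Finset.mul_sum]
  rw [Finset.sum_comm]

theorem quad_vecMulVec {ι : Type*} [Fintype ι] (a x : ι → ℝ) :
    x ⬝ᵥ (vecMulVec a a *ᵥ x) = (a ⬝ᵥ x) ^ 2 := by
  simp only [Matrix.mulVec, dotProduct, vecMulVec_apply, pow_two]
  rw [Finset.sum_mul_sum]
  refine Finset.sum_congr rfl fun i _ => ?_
  rw [Finset.mul_sum]
  refine Finset.sum_congr rfl fun j _ => ?_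
  ring

theorem vecMul_eq_zero_of_rank {p : ℕ} {ι : Type*} [Fintype ι] (G : Matrix (Fin p) ι ℝ)
    (hG : G.rank = p) (x : Fin p → ℝ) (hx : x ᵥ* G = 0) : x = 0 := by
  have h1 : Gᵀ.rank = p := by rw [Matrix.rank_transpose]; exact hG
  have h2 : Module.finrank ℝ (LinearMap.range Gᵀ.mulVecLin) = p := h1
  have h3 := LinearMap.finrank_range_add_finrank_ker Gᵀ.mulVecLin
  rw [h2] at h3
  simp only [Module.finrank_pi, Fintype.card_fin] at h3
  have h4 : Module.finrank ℝ (LinearMap.ker Gᵀ.mulVecLin) = 0 := by omega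
  have h5 : LinearMap.ker Gᵀ.mulVecLin = ⊥ := Submodule.finrank_eq_zero.mp h4
  have h6 : Gᵀ.mulVecLin x = 0 := by
    simp [Matrix.mulVecLin_apply, Matrix.mulVec_transpose, hx]
  exact (LinearMap.ker_eq_bot.mp h5) (by simpa using h6)

variable {n m p : ℕ} (A : Matrix (Fin n) (Fin n) ℝ) (B : Matrix (Fin n) (Fin m) ℝ)
  (C : Matrix (Fin p) (Fin n) ℝ) (D : Matrix (Fin p) (Fin m) ℝ)
  (x0 : Fin n → ℝ) (u : ℕ → Fin m → ℝ)

lemma stateSeq_add (k i : ℕ) :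
    stateSeq A B x0 u (k + i) =
      (A ^ i) *ᵥ stateSeq A B x0 u k
        + ∑ j ∈ range i, (A ^ (i - 1 - j) * B) *ᵥ u (k + j) := by
  induction i with
  | zero => simp
  | succ i ih =>
    have hk : k + (i + 1) = (k + i) + 1 := by ring
    rw [hk]
    show A *ᵥ stateSeq A B x0 u (k + i) + B *ᵥ u (k + i) = _
    rw [ih, Matrix.mulVec_add, sum_range_succ]
    have e1 : A *ᵥ ((A ^ i) *ᵥ stateSeq A B x0 u k) = (A ^ (i+1)) *ᵥ stateSeq A B x0 u k := by
      rw [Matrix.mulVec_mulVec, ← pow_succ']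
    have e2 : A *ᵥ (∑ j ∈ range i, (A ^ (i - 1 - j) * B) *ᵥ u (k + j))
        = ∑ j ∈ range i, (A ^ (i + 1 - 1 - j) * B) *ᵥ u (k + j) := by
      rw [mv_sum']
      refine Finset.sum_congr rfl fun j hj => ?_
      have hj' : j < i := mem_range.mp hj
      have hexp : i + 1 - 1 - j = (i - 1 - j) + 1 := by omega
      rw [Matrix.mulVec_mulVec, ← Matrix.mul_assoc, hexp, pow_succ']
    rw [e1, e2]
    have e3 : (A ^ (i + 1 - 1 - i) * B) *ᵥ u (k + i) = B *ᵥ u (k + i) := by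
      simp
    rw [e3]
    abel

lemma outputSeq_add (k i : ℕ) :
    outputSeq A B C D x0 u (k + i) =
      (C * A ^ i) *ᵥ stateSeq A B x0 u k
        + ∑ q ∈ range (i + 1), (Markov A B C D q) *ᵥ u (k + (i - q)) := by
  rw [outputSeq, stateSeq_add, Finset.sum_range_succ', Matrix.mulVec_add, mv_sum']
  have e0 : (Markov A B C D 0) *ᵥ u (k + (i - 0)) = D *ᵥ u (k + i) := by simp [Markov]
  rw [e0]
  have e1 : ∀ j ∈ range i, C *ᵥ ((A ^ (i - 1 - j) * B) *ᵥ u (k + j))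
      = (fun q => (Markov A B C D (q+1)) *ᵥ u (k + (i - (q+1)))) (i - 1 - j) := by
    intro j hj
    have hj' : j < i := mem_range.mp hj
    have h1 : i - (i - 1 - j + 1) = j := by omega
    simp only [Markov, h1, Matrix.mulVec_mulVec, Matrix.mul_assoc]
  rw [Finset.sum_congr rfl e1,
    Finset.sum_range_reflect (fun q => Markov A B C D (q+1) *ᵥ u (k + (i - (q+1)))) i]
  rw [Matrix.mulVec_mulVec]
  abel

lemma Mmat_mulVec (d : ℕ → ℝ) (k : ℕ) :
    (Mmat A B C D d) *ᵥ (fun il : Fin (n+1) × Fin m => u (k + (il.1 : ℕ)) il.2)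
    = ∑ i ∈ range (n+1), ∑ q ∈ range ((n-i)+1),
        d ((n-i)-q) • (Markov A B C D q *ᵥ u (k+i)) := by
  ext r
  simp only [Matrix.mulVec, dotProduct, Mmat, Matrix.of_apply, Fintype.sum_prod_type,
    Matrix.sum_apply, Matrix.smul_apply, smul_eq_mul, Finset.sum_apply', Finset.sum_apply,
    Pi.smul_apply]
  rw [Fin.sum_univ_eq_sum_range
    (fun j => ∑ l, (∑ q ∈ range ((n-j)+1), d ((n-j)-q) * Markov A B C D q r l) * u (k+j) l) (n+1)]
  refine Finset.sum_congr rfl fun i _ => ?_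
  simp_rw [Finset.sum_mul, Finset.mul_sum, mul_assoc]
  rw [Finset.sum_comm]

lemma swap_sum (d : ℕ → ℝ) (k : ℕ) :
    ∑ j ∈ range (n+1), ∑ q ∈ range ((n-j)+1), d j • (Markov A B C D q *ᵥ u (k+((n-j)-q)))
    = ∑ i ∈ range (n+1), ∑ q ∈ range ((n-i)+1), d ((n-i)-q) • (Markov A B C D q *ᵥ u (k+i)) := by
  rw [Finset.sum_sigma' (range (n+1)) (fun j => range ((n-j)+1)),
    Finset.sum_sigma' (range (n+1)) (fun i => range ((n-i)+1))]
  refine Finset.sum_nbij' (fun a => ⟨n - a.1 - a.2, a.2⟩) (fun a => ⟨n - a.1 - a.2, a.2⟩) ?_ ?_ ?_ ?_ ?_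
  · rintro ⟨j, q⟩ h
    simp only [Finset.mem_sigma, Finset.mem_range] at h ⊢
    omega
  · rintro ⟨i, q⟩ h
    simp only [Finset.mem_sigma, Finset.mem_range] at h ⊢
    omega
  · rintro ⟨j, q⟩ h
    simp only [Finset.mem_sigma, Finset.mem_range] at h
    simp only [Sigma.mk.inj_iff, heq_eq_eq, and_true]
    omega
  · rintro ⟨i, q⟩ h
    simp only [Finset.mem_sigma, Finset.mem_range] at h
    simp only [Sigma.mk.inj_iff, heq_eq_eq, and_true]
    omega
  · rintro ⟨j, q⟩ h
    simp only [Finset.mem_sigma, Finset.mem_range] at h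
    have h1 : n - (n - j - q) - q = j := by omega
    have h2 : (n - j) - q = n - j - q := by omega
    simp [h1, h2]

lemma key_identity (d : ℕ → ℝ) (hd : ∑ j ∈ range (n+1), d j • A ^ (n-j) = 0) (k : ℕ) :
    ∑ j ∈ range (n+1), d j • outputSeq A B C D x0 u (k + (n - j))
    = (Mmat A B C D d) *ᵥ (fun il : Fin (n+1) × Fin m => u (k + (il.1 : ℕ)) il.2) := by
  rw [Mmat_mulVec, ← swap_sum]
  have e1 : ∀ j ∈ range (n+1),
      d j • outputSeq A B C D x0 u (k + (n - j))
      = d j • ((C * A ^ (n-j)) *ᵥ stateSeq A B x0 u k)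
        + ∑ q ∈ range ((n-j)+1), d j • (Markov A B C D q *ᵥ u (k+((n-j)-q))) := by
    intro j _
    rw [outputSeq_add, smul_add, Finset.smul_sum]
  rw [Finset.sum_congr rfl e1, Finset.sum_add_distrib]
  have e2 : ∑ j ∈ range (n+1), d j • ((C * A ^ (n-j)) *ᵥ stateSeq A B x0 u k) = 0 := by
    have hz : ∑ j ∈ range (n+1), d j • (C * A ^ (n-j)) = 0 := by
      calc ∑ j ∈ range (n+1), d j • (C * A ^ (n-j))
          = C * ∑ j ∈ range (n+1), d j • A ^ (n-j) := by
            rw [Matrix.mul_sum]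
            exact Finset.sum_congr rfl fun j _ => (Matrix.mul_smul _ _ _).symm
        _ = 0 := by rw [hd, Matrix.mul_zero]
    calc ∑ j ∈ range (n+1), d j • ((C * A ^ (n-j)) *ᵥ stateSeq A B x0 u k)
        = (∑ j ∈ range (n+1), d j • (C * A ^ (n-j))) *ᵥ stateSeq A B x0 u k := by
          rw [sum_mv']
          exact Finset.sum_congr rfl fun j _ => (Matrix.smul_mulVec _ _ _).symm
      _ = 0 := by rw [hz, Matrix.zero_mulVec]
  rw [e2, zero_add]

lemma vecMul_Gamma_eq_zero (d : ℕ → ℝ) (hd0 : d 0 ≠ 0) (x : Fin p → ℝ)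
    (hx : x ᵥ* Mmat A B C D d = 0) : x ᵥ* Gammamat A B C D = 0 := by
  set g : ℕ → Fin m → ℝ := fun q l => ∑ r, x r * Markov A B C D q r l with hg
  have hcond : ∀ s : ℕ, s ≤ n → ∀ l : Fin m,
      ∑ q ∈ range (s + 1), d (s - q) * g q l = 0 := by
    intro s hs l
    have hi : (⟨n - s, by omega⟩ : Fin (n+1)).1 = n - s := rfl
    have h0 := congrFun hx (⟨n - s, by omega⟩, l)
    simp only [Matrix.vecMul, dotProduct, Mmat, Matrix.of_apply, Matrix.sum_apply,
      Matrix.smul_apply, smul_eq_mul, Pi.zero_apply, hi] at h0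
    have hns : n - (n - s) = s := by omega
    rw [hns] at h0
    rw [← h0]
    simp only [hg]
    simp_rw [Finset.mul_sum]
    rw [Finset.sum_comm]
    refine Finset.sum_congr rfl fun r _ => Finset.sum_congr rfl fun q _ => by ring
  have hzero : ∀ r : ℕ, r ≤ n → ∀ l : Fin m, g r l = 0 := by
    intro r
    induction r using Nat.strong_induction_on with
    | _ r ih =>
      intro hr l
      have h0 := hcond r hr l
      rw [Finset.sum_range_succ] at h0
      have h1 : ∀ q ∈ range r, d (r - q) * g q l = 0 := by
        intro q hq
        have hq' : q < r := mem_range.mp hq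
        rw [ih q hq' (by omega) l, mul_zero]
      rw [Finset.sum_congr rfl h1, Finset.sum_const_zero, zero_add, Nat.sub_self] at h0
      have := mul_eq_zero.mp h0
      tauto
  funext jl
  obtain ⟨q, l⟩ := jl
  simp only [Matrix.vecMul, dotProduct, Gammamat, Matrix.of_apply, Pi.zero_apply]
  exact hzero q (by omega) l

end Helpers

/-- if `u` is `K_u`-PE of order `n+1`, then for every output reachable system and
every initial state, `∑ y_k y_kᵀ ⪰ (1/(n+1)) M K_u Mᵀ` and `K_y = (1/(n+1)) M K_u Mᵀ ≻ 0`. -/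
theorem stmt_6 {n m p : ℕ} (hn : 0 < n) (hm : 0 < m) (hp : 0 < p)
    (N : ℕ) (hN : n < N) (u : ℕ → Fin m → ℝ)
    (Ku : Matrix (Fin (n + 1) × Fin m) (Fin (n + 1) × Fin m) ℝ) (hKu : Ku.PosDef)
    (hPE : ((∑ k ∈ Finset.range (N - (n + 1) + 1),
        vecMulVec (fun il : Fin (n + 1) × Fin m => u (k + (il.1 : ℕ)) il.2)
          (fun il : Fin (n + 1) × Fin m => u (k + (il.1 : ℕ)) il.2)) - Ku).PosSemidef) :
    ∀ (A : Matrix (Fin n) (Fin n) ℝ) (B : Matrix (Fin n) (Fin m) ℝ)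
      (C : Matrix (Fin p) (Fin n) ℝ) (D : Matrix (Fin p) (Fin m) ℝ),
      (Gammamat A B C D).rank = p →
      ∀ d : ℕ → ℝ, d 0 ≠ 0 →
        (∑ j ∈ Finset.range (n + 1), d j ^ 2 = 1) →
        (∑ j ∈ Finset.range (n + 1), d j • A ^ (n - j) = 0) →
        ∀ x0 : Fin n → ℝ,
          ((∑ k ∈ Finset.range N,
              vecMulVec (outputSeq A B C D x0 u k) (outputSeq A B C D x0 u k)) -
            ((1 : ℝ) / (n + 1)) • (Mmat A B C D d * Ku * (Mmat A B C D d)ᴴ)).PosSemidef ∧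
          (((1 : ℝ) / (n + 1)) • (Mmat A B C D d * Ku * (Mmat A B C D d)ᴴ)).PosDef := by
  intro A B C D hrank d hd0 hd2 hdA x0
  set M := Mmat A B C D d with hM
  set y : ℕ → Fin p → ℝ := fun t => outputSeq A B C D x0 u t with hy
  set w : ℕ → Fin (n + 1) × Fin m → ℝ :=
    fun k => fun il : Fin (n + 1) × Fin m => u (k + (il.1 : ℕ)) il.2 with hw
  have hnp : (0:ℝ) < (n : ℝ) + 1 := by positivity
  -- Hermitian facts
  have hermS : (∑ k ∈ Finset.range N, vecMulVec (y k) (y k)).IsHermitian := by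
    unfold Matrix.IsHermitian
    ext i j
    simp only [Matrix.conjTranspose_apply, Matrix.sum_apply, vecMulVec_apply, star_trivial]
    exact Finset.sum_congr rfl fun k _ => by ring
  have hermK : (((1 : ℝ) / (n + 1)) • (M * Ku * Mᴴ)).IsHermitian := by
    have h := Matrix.isHermitian_mul_mul_conjTranspose M hKu.1
    unfold Matrix.IsHermitian at h ⊢
    rw [Matrix.conjTranspose_smul, star_trivial, h]
  -- quadratic form computation
  have quad : ∀ x : Fin p → ℝ,
      x ⬝ᵥ ((M * Ku * Mᴴ) *ᵥ x) = (x ᵥ* M) ⬝ᵥ (Ku *ᵥ (x ᵥ* M)) := by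
    intro x
    rw [← Matrix.mulVec_mulVec, ← Matrix.mulVec_mulVec, Matrix.dotProduct_mulVec]
    have hMT : Mᴴ = Mᵀ := by
      ext i j
      simp [Matrix.conjTranspose_apply]
    rw [hMT, Matrix.mulVec_transpose]
  -- key scalar bound
  have main : ∀ x : Fin p → ℝ,
      (x ᵥ* M) ⬝ᵥ (Ku *ᵥ (x ᵥ* M)) ≤ ((n:ℝ) + 1) * ∑ t ∈ Finset.range N, (x ⬝ᵥ y t) ^ 2 := by
    intro x
    set z := x ᵥ* M with hz
    have h1 : z ⬝ᵥ (Ku *ᵥ z) ≤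
        ∑ k ∈ Finset.range (N - (n + 1) + 1), (w k ⬝ᵥ z) ^ 2 := by
      have := hPE.dotProduct_mulVec_nonneg z
      simp only [star_trivial] at this
      rw [Matrix.sub_mulVec, dotProduct_sub, sub_nonneg, sum_mv', dp_sum'] at this
      calc z ⬝ᵥ (Ku *ᵥ z) ≤ ∑ k ∈ Finset.range (N - (n + 1) + 1),
            z ⬝ᵥ (vecMulVec (w k) (w k) *ᵥ z) := this
        _ = _ := Finset.sum_congr rfl fun k _ => quad_vecMulVec _ _
    have h2 : ∀ k, w k ⬝ᵥ z = ∑ j ∈ Finset.range (n+1), d j * (x ⬝ᵥ y (k + (n - j))) := by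
      intro k
      rw [dotProduct_comm, hz, ← Matrix.dotProduct_mulVec,
        ← key_identity A B C D x0 u d hdA k, dp_sum']
      exact Finset.sum_congr rfl fun j _ => by
        rw [dotProduct_smul, smul_eq_mul]
    have h3 : ∀ k, (w k ⬝ᵥ z) ^ 2 ≤ ∑ j ∈ Finset.range (n+1), (x ⬝ᵥ y (k + j)) ^ 2 := by
      intro k
      rw [h2 k]
      calc (∑ j ∈ Finset.range (n+1), d j * (x ⬝ᵥ y (k + (n - j)))) ^ 2
          ≤ (∑ j ∈ Finset.range (n+1), d j ^ 2) *
            ∑ j ∈ Finset.range (n+1), (x ⬝ᵥ y (k + (n - j))) ^ 2 :=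
            Finset.sum_mul_sq_le_sq_mul_sq _ _ _
        _ = ∑ j ∈ Finset.range (n+1), (x ⬝ᵥ y (k + (n - j))) ^ 2 := by rw [hd2, one_mul]
        _ = ∑ j ∈ Finset.range (n+1), (x ⬝ᵥ y (k + j)) ^ 2 := by
            rw [← Finset.sum_range_reflect (fun j => (x ⬝ᵥ y (k + j)) ^ 2) (n+1)]
            exact Finset.sum_congr rfl fun j hj => by
              have : n + 1 - 1 - j = n - j := by omega
              rw [this]
    have h4 : ∑ k ∈ Finset.range (N - (n + 1) + 1), ∑ j ∈ Finset.range (n+1),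
        (x ⬝ᵥ y (k + j)) ^ 2 ≤ ((n:ℝ) + 1) * ∑ t ∈ Finset.range N, (x ⬝ᵥ y t) ^ 2 := by
      rw [Finset.sum_comm]
      have hR : N - (n + 1) + 1 = N - n := by omega
      calc ∑ j ∈ Finset.range (n+1), ∑ k ∈ Finset.range (N - (n + 1) + 1), (x ⬝ᵥ y (k + j)) ^ 2
          ≤ ∑ j ∈ Finset.range (n+1), ∑ t ∈ Finset.range N, (x ⬝ᵥ y t) ^ 2 := by
            refine Finset.sum_le_sum fun j hj => ?_
            have hj' : j ≤ n := by have := mem_range.mp hj; omega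
            rw [hR]
            have e : ∑ k ∈ Finset.range (N - n), (x ⬝ᵥ y (k + j)) ^ 2
                = ∑ t ∈ Finset.Ico j (j + (N - n)), (x ⬝ᵥ y t) ^ 2 := by
              rw [Finset.sum_Ico_eq_sum_range]
              have : j + (N - n) - j = N - n := by omega
              rw [this]
              exact Finset.sum_congr rfl fun k _ => by rw [add_comm j k]
            rw [e]
            refine Finset.sum_le_sum_of_subset_of_nonneg ?_ (fun t _ _ => sq_nonneg _)
            intro t ht
            simp only [Finset.mem_Ico, Finset.mem_range] at ht ⊢
            omega
        _ = ((n:ℝ) + 1) * ∑ t ∈ Finset.range N, (x ⬝ᵥ y t) ^ 2 := by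
            rw [Finset.sum_const, Finset.card_range, nsmul_eq_mul]
            push_cast
            ring
    calc z ⬝ᵥ (Ku *ᵥ z) ≤ ∑ k ∈ Finset.range (N - (n + 1) + 1), (w k ⬝ᵥ z) ^ 2 := h1
      _ ≤ ∑ k ∈ Finset.range (N - (n + 1) + 1), ∑ j ∈ Finset.range (n+1),
            (x ⬝ᵥ y (k + j)) ^ 2 := Finset.sum_le_sum fun k _ => h3 k
      _ ≤ ((n:ℝ) + 1) * ∑ t ∈ Finset.range N, (x ⬝ᵥ y t) ^ 2 := h4
  constructor
  · refine Matrix.PosSemidef.of_dotProduct_mulVec_nonneg (hermS.sub hermK) fun x => ?_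
    simp only [star_trivial]
    rw [Matrix.sub_mulVec, dotProduct_sub, sub_nonneg, Matrix.smul_mulVec,
      dotProduct_smul, smul_eq_mul, quad]
    have hS : x ⬝ᵥ ((∑ k ∈ Finset.range N, vecMulVec (y k) (y k)) *ᵥ x)
        = ∑ t ∈ Finset.range N, (x ⬝ᵥ y t) ^ 2 := by
      rw [sum_mv', dp_sum']
      refine Finset.sum_congr rfl fun k _ => ?_
      rw [quad_vecMulVec, dotProduct_comm]
    rw [hS]
    have := main x
    rw [div_mul_eq_mul_div, one_mul, div_le_iff₀ hnp]
    calc (x ᵥ* M) ⬝ᵥ (Ku *ᵥ (x ᵥ* M)) ≤ ((n:ℝ) + 1) * ∑ t ∈ Finset.range N, (x ⬝ᵥ y t) ^ 2 := this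
      _ = (∑ t ∈ Finset.range N, (x ⬝ᵥ y t) ^ 2) * ((n:ℝ) + 1) := by ring
  · refine Matrix.PosDef.of_dotProduct_mulVec_pos hermK fun x hx => ?_
    simp only [star_trivial]
    rw [Matrix.smul_mulVec, dotProduct_smul, smul_eq_mul, quad]
    have hzne : x ᵥ* M ≠ 0 := by
      intro h0
      exact hx (vecMul_eq_zero_of_rank (Gammamat A B C D) hrank x
        (vecMul_Gamma_eq_zero A B C D d hd0 x h0))
    have hpos : 0 < (x ᵥ* M) ⬝ᵥ (Ku *ᵥ (x ᵥ* M)) := by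
      have := hKu.dotProduct_mulVec_pos hzne
      simpa using this
    positivity
end

section
/- The following are equivalent: (i) the system (A,B,C,D) is output reachable; (ii) Γ = [D CB CAB ⋯ CA^{n−1}B] has full row rank p; (iii) M has full row rank p. -/
open Matrix Finset

/-- Output reachability: every `ŷ ∈ ℝ^p` is reachable from `x_0 = 0` at some time `T`. -/
def OutputReachable {n m p : ℕ} (A : Matrix (Fin n) (Fin n) ℝ) (B : Matrix (Fin n) (Fin m) ℝ)
    (C : Matrix (Fin p) (Fin n) ℝ) (D : Matrix (Fin p) (Fin m) ℝ) : Prop :=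
  ∀ yhat : Fin p → ℝ, ∃ (T : ℕ) (u : ℕ → Fin m → ℝ),
    outputSeq A B C D 0 u T = yhat

/- ---------------- auxiliary lemmas ---------------- -/

lemma aux_rank_iff {p : ℕ} {k : Type*} [Fintype k] (M : Matrix (Fin p) k ℝ) :
    M.rank = p ↔ LinearMap.range M.mulVecLin = ⊤ := by
  unfold Matrix.rank
  constructor
  · intro h
    apply Submodule.eq_top_of_finrank_eq
    rw [h, Module.finrank_fin_fun]
  · intro h
    rw [h, finrank_top, Module.finrank_fin_fun]

noncomputable def convInv (d g : ℕ → ℝ) : ℕ → ℝ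
  | r => (g r - ∑ j ∈ (Finset.range r).attach, d (r - j.1) * convInv d g j.1) / d 0
decreasing_by exact Finset.mem_range.mp j.2

lemma convInv_spec (d g : ℕ → ℝ) (hd0 : d 0 ≠ 0) (r : ℕ) :
    ∑ j ∈ Finset.range (r + 1), d (r - j) * convInv d g j = g r := by
  rw [Finset.sum_range_succ, Nat.sub_self]
  rw [convInv]
  rw [← Finset.sum_attach (Finset.range r) (fun j => d (r - j) * convInv d g j)]
  field_simp
  ring

section Main

variable {n m p : ℕ} (A : Matrix (Fin n) (Fin n) ℝ) (B : Matrix (Fin n) (Fin m) ℝ)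
    (C : Matrix (Fin p) (Fin n) ℝ) (D : Matrix (Fin p) (Fin m) ℝ)

lemma sum_mulVec_aux {ι α β : Type*} [Fintype β] (s : Finset ι) (f : ι → Matrix α β ℝ)
    (w : β → ℝ) : (∑ i ∈ s, f i).mulVec w = ∑ i ∈ s, (f i).mulVec w := by
  funext a
  simp only [Finset.sum_apply, Matrix.mulVec, dotProduct, Matrix.sum_apply, Finset.sum_mul]
  rw [Finset.sum_comm]

lemma stateSeq_formula (u : ℕ → Fin m → ℝ) (k : ℕ) :
    stateSeq A B 0 u k = ∑ j ∈ Finset.range k, (A ^ (k - 1 - j)).mulVec (B.mulVec (u j)) := by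
  induction k with
  | zero => simp [stateSeq]
  | succ k ih =>
    rw [stateSeq, ih, Finset.sum_range_succ]
    have h1 : A.mulVec (∑ j ∈ Finset.range k, (A ^ (k - 1 - j)).mulVec (B.mulVec (u j)))
        = ∑ j ∈ Finset.range k, (A ^ (k - j)).mulVec (B.mulVec (u j)) := by
      rw [show A.mulVec (∑ j ∈ Finset.range k, (A ^ (k - 1 - j)).mulVec (B.mulVec (u j)))
          = A.mulVecLin (∑ j ∈ Finset.range k, (A ^ (k - 1 - j)).mulVec (B.mulVec (u j))) from rfl,
        map_sum]
      refine Finset.sum_congr rfl fun j hj => ?_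
      rw [Finset.mem_range] at hj
      have : A ^ (k - j) = A * A ^ (k - 1 - j) := by
        rw [← pow_succ']
        congr 1
        omega
      simp [this, Matrix.mulVecLin_apply, Matrix.mulVec_mulVec, Matrix.mul_assoc]
    rw [h1]
    congr 1
    simp [Matrix.one_mulVec, show k + 1 - 1 - k = 0 from by omega]

lemma outputSeq_formula (u : ℕ → Fin m → ℝ) (T : ℕ) :
    outputSeq A B C D 0 u T
      = ∑ j ∈ Finset.range (T + 1), (Markov A B C D (T - j)).mulVec (u j) := by
  rw [outputSeq, stateSeq_formula, Finset.sum_range_succ, Nat.sub_self]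
  rw [show C.mulVec (∑ j ∈ Finset.range T, (A ^ (T - 1 - j)).mulVec (B.mulVec (u j)))
      = C.mulVecLin (∑ j ∈ Finset.range T, (A ^ (T - 1 - j)).mulVec (B.mulVec (u j))) from rfl,
    map_sum]
  congr 1
  refine Finset.sum_congr rfl fun j hj => ?_
  rw [Finset.mem_range] at hj
  have : T - j = (T - 1 - j) + 1 := by omega
  rw [this]
  simp [Markov, Matrix.mulVecLin_apply, Matrix.mulVec_mulVec, Matrix.mul_assoc]

lemma gamma_mulVec (v : Fin (n + 1) × Fin m → ℝ) :
    (Gammamat A B C D).mulVec v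
      = ∑ q ∈ Finset.range (n + 1),
          (Markov A B C D q).mulVec (fun l => v (⟨min q n, by omega⟩, l)) := by
  funext i
  rw [Matrix.mulVec, dotProduct, Fintype.sum_prod_type]
  rw [Finset.sum_apply]
  rw [← Fin.sum_univ_eq_sum_range
    (fun q => ((Markov A B C D q).mulVec (fun l => v (⟨min q n, by omega⟩, l))) i) (n + 1)]
  refine Finset.sum_congr rfl fun q _ => ?_
  have hq : (⟨min (q : ℕ) n, by omega⟩ : Fin (n + 1)) = q := by
    apply Fin.ext
    simp [Nat.min_eq_left (Fin.is_le q)]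
  simp only [hq, Matrix.mulVec, dotProduct, Gammamat, Matrix.of_apply]

lemma markov_block_mem (k : ℕ) (hk : k ≤ n) (w : Fin m → ℝ) :
    (Markov A B C D k).mulVec w ∈ LinearMap.range (Gammamat A B C D).mulVecLin := by
  refine ⟨fun jl => if (jl.1 : ℕ) = k then w jl.2 else 0, ?_⟩
  rw [Matrix.mulVecLin_apply, gamma_mulVec]
  rw [Finset.sum_eq_single k]
  · congr 1
    funext l
    simp [Nat.min_eq_left hk]
  · intro q hq hqk
    rw [Finset.mem_range] at hq
    have : (fun l => if (min q n) = k then w l else 0) = (0 : Fin m → ℝ) := by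
      funext l
      simp [Nat.min_eq_left (by omega : q ≤ n), hqk]
    simp only [this, Matrix.mulVec_zero]
  · intro h
    exact absurd (Finset.mem_range.mpr (by omega)) h

lemma markov_mem (d : ℕ → ℝ) (hd0 : d 0 ≠ 0)
    (hCayley : ∑ j ∈ Finset.range (n + 1), d j • A ^ (n - j) = 0) (k : ℕ) (w : Fin m → ℝ) :
    (Markov A B C D k).mulVec w ∈ LinearMap.range (Gammamat A B C D).mulVecLin := by
  induction k using Nat.strong_induction_on with
  | _ k ih =>
  by_cases hk : k ≤ n
  · exact markov_block_mem A B C D k hk w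
  · push_neg at hk
    -- Cayley–Hamilton rearranged
    have hA : d 0 • A ^ n = -∑ j ∈ Finset.range n, d (j + 1) • A ^ (n - 1 - j) := by
      rw [Finset.sum_range_succ'] at hCayley
      have : (∑ j ∈ Finset.range n, d (j + 1) • A ^ (n - (j + 1))) + d 0 • A ^ (n - 0) = 0 :=
        hCayley
      rw [Nat.sub_zero] at this
      have h2 : ∑ j ∈ Finset.range n, d (j + 1) • A ^ (n - (j + 1))
          = ∑ j ∈ Finset.range n, d (j + 1) • A ^ (n - 1 - j) := by
        refine Finset.sum_congr rfl fun j hj => ?_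
        congr 2
        omega
      rw [h2] at this
      linear_combination (norm := abel) this
    have hk1 : k - 1 = (k - 1 - n) + n := by omega
    have hA2 : d 0 • A ^ (k - 1) = -∑ j ∈ Finset.range n, d (j + 1) • A ^ (k - 2 - j) := by
      have hsplit : A ^ (k - 1) = A ^ (k - 1 - n) * A ^ n := by
        rw [← pow_add, Nat.sub_add_cancel (by omega : n ≤ k - 1)]
      rw [hsplit, ← Matrix.mul_smul, hA, Matrix.mul_neg, Matrix.mul_sum]
      congr 1
      refine Finset.sum_congr rfl fun j hj => ?_
      rw [Finset.mem_range] at hj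
      rw [Matrix.mul_smul, ← pow_add]
      congr 2
      omega
    have hMk : Markov A B C D k = C * A ^ (k - 1) * B := by
      have : k = (k - 1) + 1 := by omega
      rw [this, Markov]
      simp
    have key : d 0 • (Markov A B C D k).mulVec w
        = -∑ j ∈ Finset.range n, d (j + 1) • (Markov A B C D (k - 1 - j)).mulVec w := by
      rw [← Matrix.smul_mulVec, hMk]
      have : d 0 • (C * A ^ (k - 1) * B) = C * (d 0 • A ^ (k - 1)) * B := by
        rw [Matrix.mul_smul, Matrix.smul_mul]
      rw [this, hA2, Matrix.mul_neg, Matrix.neg_mul, Matrix.neg_mulVec, Matrix.mul_sum,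
        Matrix.sum_mul, sum_mulVec_aux]
      congr 1
      refine Finset.sum_congr rfl fun j hj => ?_
      rw [Finset.mem_range] at hj
      have hM : Markov A B C D (k - 1 - j) = C * A ^ (k - 2 - j) * B := by
        have : k - 1 - j = (k - 2 - j) + 1 := by omega
        rw [this, Markov]
      rw [hM, Matrix.mul_smul, Matrix.smul_mul, Matrix.smul_mulVec]
    have hmem : d 0 • (Markov A B C D k).mulVec w
        ∈ LinearMap.range (Gammamat A B C D).mulVecLin := by
      rw [key]
      refine Submodule.neg_mem _ (Submodule.sum_mem _ fun j hj => Submodule.smul_mem _ _ ?_)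
      rw [Finset.mem_range] at hj
      exact ih (k - 1 - j) (by omega)
    have := Submodule.smul_mem _ (d 0)⁻¹ hmem
    rwa [smul_smul, inv_mul_cancel₀ hd0, one_smul] at this

lemma reachable_iff (d : ℕ → ℝ) (hd0 : d 0 ≠ 0)
    (hCayley : ∑ j ∈ Finset.range (n + 1), d j • A ^ (n - j) = 0) :
    OutputReachable A B C D ↔ LinearMap.range (Gammamat A B C D).mulVecLin = ⊤ := by
  constructor
  · intro h
    rw [Submodule.eq_top_iff']
    intro y
    obtain ⟨T, u, hu⟩ := h y
    rw [← hu, outputSeq_formula]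
    exact Submodule.sum_mem _ fun j _ => markov_mem A B C D d hd0 hCayley _ _
  · intro h yhat
    have : yhat ∈ LinearMap.range (Gammamat A B C D).mulVecLin := h ▸ Submodule.mem_top
    obtain ⟨v, hv⟩ := this
    refine ⟨n, fun j l => v (⟨min (n - j) n, by omega⟩, l), ?_⟩
    rw [outputSeq_formula]
    have : ∀ j, j ∈ Finset.range (n + 1) →
        (Markov A B C D (n - j)).mulVec (fun l => v (⟨min (n - j) n, by omega⟩, l))
          = (fun q => (Markov A B C D q).mulVec (fun l => v (⟨min q n, by omega⟩, l))) (n - j) :=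
      fun j _ => rfl
    rw [Finset.sum_congr rfl this]
    have hre := Finset.sum_range_reflect
      (fun q => (Markov A B C D q).mulVec (fun l => v (⟨min q n, by omega⟩, l))) (n + 1)
    simp only [Nat.add_sub_cancel] at hre
    rw [hre, ← gamma_mulVec]
    exact hv

/-- The block-Toeplitz coefficient matrix `T` with `M = Γ * T`. -/
noncomputable def Tmat (n m : ℕ) (d : ℕ → ℝ) :
    Matrix (Fin (n + 1) × Fin m) (Fin (n + 1) × Fin m) ℝ :=
  Matrix.of fun ql jl =>
    if ql.2 = jl.2 ∧ (ql.1 : ℕ) + (jl.1 : ℕ) ≤ n then d (n - (jl.1 : ℕ) - (ql.1 : ℕ)) else 0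

lemma Mmat_eq_gamma_mul (d : ℕ → ℝ) :
    Mmat A B C D d = Gammamat A B C D * Tmat n m d := by
  funext i jl
  obtain ⟨j, l⟩ := jl
  rw [Matrix.mul_apply, Fintype.sum_prod_type]
  have step1 : ∀ q : Fin (n + 1),
      (∑ l' : Fin m, Gammamat A B C D i (q, l') * Tmat n m d (q, l') (j, l))
        = if (q : ℕ) + (j : ℕ) ≤ n then d (n - (j : ℕ) - (q : ℕ)) * Markov A B C D q i l
          else 0 := by
    intro q
    by_cases hq : (q : ℕ) + (j : ℕ) ≤ n
    · rw [if_pos hq, Finset.sum_eq_single l]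
      · simp [Gammamat, Tmat, hq, mul_comm]
      · intro l' _ hl'
        simp [Tmat, hl']
      · intro h
        exact absurd (Finset.mem_univ l) h
    · rw [if_neg hq]
      apply Finset.sum_eq_zero
      intro l' _
      simp [Tmat, hq]
  rw [Finset.sum_congr rfl fun q _ => step1 q]
  rw [Fin.sum_univ_eq_sum_range
    (fun q => if q + (j : ℕ) ≤ n then d (n - (j : ℕ) - q) * Markov A B C D q i l else 0) (n + 1)]
  rw [← Finset.sum_filter]
  have hfil : Finset.filter (fun q => q + (j : ℕ) ≤ n) (Finset.range (n + 1))
      = Finset.range (n - (j : ℕ) + 1) := by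
    ext q
    simp only [Finset.mem_filter, Finset.mem_range]
    have := j.is_le
    omega
  rw [hfil]
  simp only [Mmat, Matrix.of_apply, Matrix.sum_apply, Matrix.smul_apply, smul_eq_mul]

lemma Tmat_surjective (d : ℕ → ℝ) (hd0 : d 0 ≠ 0) :
    Function.Surjective (Tmat n m d).mulVecLin := by
  intro w
  set g : Fin m → ℕ → ℝ := fun l r => if h : r ≤ n then w (⟨n - r, by omega⟩, l) else 0 with hg
  refine ⟨fun jl => convInv d (g jl.2) (jl.1 : ℕ), ?_⟩
  funext ql
  obtain ⟨q, l⟩ := ql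
  rw [Matrix.mulVecLin_apply, Matrix.mulVec, dotProduct, Fintype.sum_prod_type]
  have step1 : ∀ j : Fin (n + 1),
      (∑ l' : Fin m, Tmat n m d (q, l) (j, l') * convInv d (g l') (j : ℕ))
        = if (q : ℕ) + (j : ℕ) ≤ n then d (n - (j : ℕ) - (q : ℕ)) * convInv d (g l) (j : ℕ)
          else 0 := by
    intro j
    by_cases hj : (q : ℕ) + (j : ℕ) ≤ n
    · rw [if_pos hj, Finset.sum_eq_single l]
      · simp [Tmat, hj]
      · intro l' _ hl'
        simp [Tmat, Ne.symm hl']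
      · intro h
        exact absurd (Finset.mem_univ l) h
    · rw [if_neg hj]
      apply Finset.sum_eq_zero
      intro l' _
      simp [Tmat, hj]
  rw [Finset.sum_congr rfl fun j _ => step1 j]
  rw [Fin.sum_univ_eq_sum_range
    (fun j => if (q : ℕ) + j ≤ n then d (n - j - (q : ℕ)) * convInv d (g l) j else 0) (n + 1)]
  rw [← Finset.sum_filter]
  have hfil : Finset.filter (fun j => (q : ℕ) + j ≤ n) (Finset.range (n + 1))
      = Finset.range (n - (q : ℕ) + 1) := by
    ext j
    simp only [Finset.mem_filter, Finset.mem_range]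
    have := q.is_le
    omega
  rw [hfil]
  have hterm : ∀ j ∈ Finset.range (n - (q : ℕ) + 1),
      d (n - j - (q : ℕ)) * convInv d (g l) j = d ((n - (q : ℕ)) - j) * convInv d (g l) j := by
    intro j hj
    rw [Finset.mem_range] at hj
    congr 2
    omega
  rw [Finset.sum_congr rfl hterm, convInv_spec d (g l) hd0 (n - (q : ℕ))]
  show g l (n - (q : ℕ)) = w (q, l)
  rw [hg]
  simp only [Nat.sub_le, dif_pos]
  have hq : (⟨n - (n - (q : ℕ)), by omega⟩ : Fin (n + 1)) = q := by
    apply Fin.ext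
    show n - (n - (q : ℕ)) = (q : ℕ)
    have := q.is_le
    omega
  rw [hq]

lemma rank_Mmat_eq (d : ℕ → ℝ) (hd0 : d 0 ≠ 0) :
    (Mmat A B C D d).rank = (Gammamat A B C D).rank := by
  have heq : LinearMap.range (Mmat A B C D d).mulVecLin
      = LinearMap.range (Gammamat A B C D).mulVecLin := by
    rw [Mmat_eq_gamma_mul, Matrix.mulVecLin_mul]
    rw [LinearMap.range_comp, LinearMap.range_eq_top.mpr (Tmat_surjective d hd0),
      Submodule.map_top]
  unfold Matrix.rank
  rw [heq]

end Main

/-- output reachability ↔ `Γ` has full row rank `p` ↔ `M` has full row rank `p`. -/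
theorem stmt_7 {n m p : ℕ} (hn : 0 < n) (hm : 0 < m) (hp : 0 < p)
    (A : Matrix (Fin n) (Fin n) ℝ) (B : Matrix (Fin n) (Fin m) ℝ)
    (C : Matrix (Fin p) (Fin n) ℝ) (D : Matrix (Fin p) (Fin m) ℝ)
    (d : ℕ → ℝ) (hd0 : d 0 ≠ 0)
    (hdnorm : ∑ j ∈ Finset.range (n + 1), d j ^ 2 = 1)
    (hCayley : ∑ j ∈ Finset.range (n + 1), d j • A ^ (n - j) = 0) :
    (OutputReachable A B C D ↔ (Gammamat A B C D).rank = p) ∧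
    ((Gammamat A B C D).rank = p ↔ (Mmat A B C D d).rank = p) := by
  constructor
  · rw [reachable_iff A B C D d hd0 hCayley, aux_rank_iff]
  · rw [rank_Mmat_eq A B C D d hd0]
end

section
/- For every symmetric positive definite K_u ∈ ℝ^{m(n+1)×m(n+1)}, the matrix inequality M K_u M^T ⪰ λ_min(K_u) · σ_min(D̄)^2 · Γ Γ^T holds in the Loewner order, where λ_min denotes the minimum eigenvalue and σ_min the minimum singular value; in particular, since d_0 ≠ 0 implies D̄ is invertible, σ_min(D̄) > 0. -/
open Matrix Finset

/-- The matrix `D̄` with `D̄_{i,j} = d_{n-i-j}` for `i + j ≤ n`, zero otherwise. -/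
noncomputable def Dbar (n : ℕ) (d : ℕ → ℝ) : Matrix (Fin (n + 1)) (Fin (n + 1)) ℝ :=
  Matrix.of fun i j =>
    if (i : ℕ) + (j : ℕ) ≤ n then d (n - (i : ℕ) - (j : ℕ)) else 0

/-- The set of (real) eigenvalues of a square matrix. -/
def eigSet {k : Type} [Fintype k] (A : Matrix k k ℝ) : Set ℝ :=
  {t : ℝ | ∃ v : k → ℝ, v ≠ 0 ∧ A.mulVec v = t • v}

/-- Minimum (real) eigenvalue `λ_min` of a square matrix. -/
noncomputable def lamMin {k : Type} [Fintype k] (A : Matrix k k ℝ) : ℝ :=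
  sInf (eigSet A)

/-- Minimum singular value `σ_min(A) = √(λ_min(Aᵀ A))`. -/
noncomputable def sigmaMin {k l : Type} [Fintype k] [Fintype l] (A : Matrix k l ℝ) : ℝ :=
  Real.sqrt (lamMin (Aᴴ * A))

section Aux

variable {k : Type} [Fintype k] [DecidableEq k] {S : Matrix k k ℝ}

lemma my_dot_mulVec_symm {k l : Type} [Fintype k] [Fintype l] (P : Matrix k l ℝ)
    (a : k → ℝ) (b : l → ℝ) : a ⬝ᵥ (P *ᵥ b) = (Pᵀ *ᵥ a) ⬝ᵥ b := by
  rw [dotProduct_mulVec, mulVec_transpose]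

omit [Fintype k] [DecidableEq k] in
lemma my_transpose_eq (hS : S.IsHermitian) : Sᵀ = S := by
  ext a b
  have h := congrFun (congrFun hS b) a
  simpa [conjTranspose_apply] using h.symm

lemma my_eig_mem (hS : S.IsHermitian) (i : k) : hS.eigenvalues i ∈ eigSet S := by
  refine ⟨⇑(hS.eigenvectorBasis i), ?_, hS.mulVec_eigenvectorBasis i⟩
  have h := hS.eigenvectorBasis.orthonormal.ne_zero i
  intro hc
  apply h
  ext j
  exact congrFun hc j

lemma my_eigSet_subset (hS : S.IsHermitian) : eigSet S ⊆ Set.range hS.eigenvalues := by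
  rintro t ⟨v, hv, hAv⟩
  by_contra hcon
  apply hv
  have key : ∀ i : k, (⇑(hS.eigenvectorBasis i)) ⬝ᵥ v = 0 := by
    intro i
    have h1 : (⇑(hS.eigenvectorBasis i)) ⬝ᵥ (S *ᵥ v)
        = hS.eigenvalues i * ((⇑(hS.eigenvectorBasis i)) ⬝ᵥ v) := by
      rw [my_dot_mulVec_symm, my_transpose_eq hS, hS.mulVec_eigenvectorBasis i,
        smul_dotProduct]
      simp [smul_eq_mul]
    have h2 : (⇑(hS.eigenvectorBasis i)) ⬝ᵥ (S *ᵥ v)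
        = t * ((⇑(hS.eigenvectorBasis i)) ⬝ᵥ v) := by
      rw [hAv, dotProduct_smul]; simp [smul_eq_mul]
    have h3 : (hS.eigenvalues i - t) * ((⇑(hS.eigenvectorBasis i)) ⬝ᵥ v) = 0 := by
      rw [sub_mul, ← h1, ← h2, sub_self]
    rcases mul_eq_zero.mp h3 with h | h
    · exact absurd ⟨i, by linarith [sub_eq_zero.mp h]⟩ hcon
    · exact h
  set vE : EuclideanSpace ℝ k := (WithLp.equiv 2 (k → ℝ)).symm v with hvE
  have hco : ∀ i : k, (hS.eigenvectorBasis.repr vE) i = 0 := by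
    intro i
    rw [hS.eigenvectorBasis.repr_apply_apply, PiLp.inner_apply]
    simpa [dotProduct, hvE, mul_comm] using key i
  have hrepr : hS.eigenvectorBasis.repr vE = 0 := by
    ext i; exact hco i
  have hvE0 : vE = 0 := hS.eigenvectorBasis.repr.map_eq_zero_iff.mp hrepr
  funext j
  have : vE j = 0 := by rw [hvE0]; rfl
  exact this

lemma my_eigSet_eq (hS : S.IsHermitian) : eigSet S = Set.range hS.eigenvalues :=
  le_antisymm (my_eigSet_subset hS) (by rintro t ⟨i, rfl⟩; exact my_eig_mem hS i)

lemma my_eigSet_finite (hS : S.IsHermitian) : (eigSet S).Finite := by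
  rw [my_eigSet_eq hS]; exact Set.finite_range _

lemma my_lamMin_le (hS : S.IsHermitian) {t : ℝ} (ht : t ∈ eigSet S) : lamMin S ≤ t :=
  csInf_le (my_eigSet_finite hS).bddBelow ht

lemma my_lamMin_mem [Nonempty k] (hS : S.IsHermitian) : lamMin S ∈ eigSet S := by
  have hne : (eigSet S).Nonempty := ⟨_, my_eig_mem hS (Classical.arbitrary k)⟩
  exact Set.Nonempty.csInf_mem hne (my_eigSet_finite hS)

lemma my_rayleigh (hS : S.IsHermitian) (x : k → ℝ) :
    lamMin S * (x ⬝ᵥ x) ≤ x ⬝ᵥ S *ᵥ x := by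
  classical
  set U : Matrix k k ℝ := (hS.eigenvectorUnitary : Matrix k k ℝ) with hU
  have hsU : (star U)ᵀ = U := by
    ext a b; simp [Matrix.star_apply, transpose_apply]
  have hUsU : U * star U = 1 := (Matrix.mem_unitaryGroup_iff).mp hS.eigenvectorUnitary.2
  set z : k → ℝ := star U *ᵥ x with hz
  have hzz : z ⬝ᵥ z = x ⬝ᵥ x := by
    calc z ⬝ᵥ z = ((star U)ᵀ *ᵥ z) ⬝ᵥ x := by rw [hz, my_dot_mulVec_symm]
    _ = (U *ᵥ (star U *ᵥ x)) ⬝ᵥ x := by rw [hsU, hz]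
    _ = ((U * star U) *ᵥ x) ⬝ᵥ x := by rw [mulVec_mulVec]
    _ = x ⬝ᵥ x := by rw [hUsU, one_mulVec]
  have hdecomp : S = U * diagonal hS.eigenvalues * star U := by
    have := hS.spectral_theorem
    simpa using this
  have hUT : Uᵀ *ᵥ x = z := by
    have h : Uᵀ = star U := by ext a b; simp [Matrix.star_apply, transpose_apply]
    rw [h]
  have hform : x ⬝ᵥ S *ᵥ x = ∑ i : k, hS.eigenvalues i * (z i * z i) := by
    have h0 : x ⬝ᵥ S *ᵥ x = x ⬝ᵥ (U * diagonal hS.eigenvalues * star U) *ᵥ x := by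
      rw [← hdecomp]
    rw [h0, ← mulVec_mulVec, ← mulVec_mulVec, my_dot_mulVec_symm, hUT]
    simp [dotProduct, mulVec_diagonal]
    exact Finset.sum_congr rfl fun i _ => by ring
  rw [hform, ← hzz]
  have : lamMin S * (z ⬝ᵥ z) = ∑ i : k, lamMin S * (z i * z i) := by
    simp [dotProduct, Finset.mul_sum]
  rw [this]
  apply Finset.sum_le_sum
  intro i _
  have h1 : lamMin S ≤ hS.eigenvalues i := my_lamMin_le hS (my_eig_mem hS i)
  have h2 : 0 ≤ z i * z i := mul_self_nonneg _
  exact mul_le_mul_of_nonneg_right h1 h2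

end Aux

lemma my_det_Dbar {n : ℕ} {d : ℕ → ℝ} (hd0 : d 0 ≠ 0) : (Dbar n d).det ≠ 0 := by
  have h := Matrix.det_permute' (Fin.revPerm) (Dbar n d)
  have hE : ((Dbar n d).submatrix id ⇑(Fin.revPerm : Equiv.Perm (Fin (n+1)))).det
      = d 0 ^ (n + 1) := by
    rw [Matrix.det_of_upperTriangular]
    · have hdiag : ∀ i : Fin (n + 1),
          (Dbar n d).submatrix id ⇑(Fin.revPerm : Equiv.Perm (Fin (n+1))) i i = d 0 := by
        intro i
        have hi : (i : ℕ) ≤ n := Nat.lt_succ_iff.mp i.isLt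
        simp only [submatrix_apply, id_eq, Fin.revPerm_apply, Dbar, Matrix.of_apply, Fin.val_rev]
        rw [if_pos (by omega)]
        congr 1
        omega
      rw [Finset.prod_congr rfl fun i _ => hdiag i, Finset.prod_const, Finset.card_univ,
        Fintype.card_fin]
    · intro i j hij
      have hi : (i : ℕ) ≤ n := Nat.lt_succ_iff.mp i.isLt
      have hj : (j : ℕ) ≤ n := Nat.lt_succ_iff.mp j.isLt
      have hlt : (j : ℕ) < (i : ℕ) := hij
      simp only [submatrix_apply, id_eq, Fin.revPerm_apply, Dbar, Matrix.of_apply, Fin.val_rev]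
      rw [if_neg (by omega)]
  intro h0
  rw [h0, mul_zero] at h
  rw [h] at hE
  exact pow_ne_zero _ hd0 hE.symm

lemma my_mulVec_inj {k : Type} [Fintype k] [DecidableEq k] {A : Matrix k k ℝ}
    (hA : A.det ≠ 0) {v : k → ℝ} (hv : v ≠ 0) : A *ᵥ v ≠ 0 := by
  have hinj : Function.Injective A.mulVec :=
    Matrix.mulVec_injective_iff_isUnit.mpr ((Matrix.isUnit_iff_isUnit_det A).mpr
      (isUnit_iff_ne_zero.mpr hA))
  intro hc
  exact hv (hinj (by rw [hc, Matrix.mulVec_zero]))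

lemma my_dot_self_pos {k : Type} [Fintype k] {v : k → ℝ} (hv : v ≠ 0) : 0 < v ⬝ᵥ v := by
  have h := (dotProduct_self_star_pos_iff (v := v)).mpr hv
  simpa using h

lemma my_eigSet_swap {k : Type} [Fintype k] [DecidableEq k] {A : Matrix k k ℝ}
    (hA : A.det ≠ 0) : eigSet (A * Aᵀ) = eigSet (Aᵀ * A) := by
  have hAT : Aᵀ.det ≠ 0 := by rwa [Matrix.det_transpose]
  ext t
  constructor
  · rintro ⟨v, hv, hAv⟩
    refine ⟨Aᵀ *ᵥ v, my_mulVec_inj hAT hv, ?_⟩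
    have h : (Aᵀ * A) *ᵥ (Aᵀ *ᵥ v) = Aᵀ *ᵥ ((A * Aᵀ) *ᵥ v) := by
      rw [Matrix.mulVec_mulVec, Matrix.mulVec_mulVec, Matrix.mul_assoc]
    rw [h, hAv, Matrix.mulVec_smul]
  · rintro ⟨v, hv, hAv⟩
    refine ⟨A *ᵥ v, my_mulVec_inj hA hv, ?_⟩
    have h : (A * Aᵀ) *ᵥ (A *ᵥ v) = A *ᵥ ((Aᵀ * A) *ᵥ v) := by
      rw [Matrix.mulVec_mulVec, Matrix.mulVec_mulVec, Matrix.mul_assoc]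
    rw [h, hAv, Matrix.mulVec_smul]

lemma my_real_conjTranspose {a b : Type} (A : Matrix a b ℝ) : Aᴴ = Aᵀ := by
  ext i j; simp [conjTranspose_apply]

lemma my_lamMin_ATA_pos {k : Type} [Fintype k] [DecidableEq k] [Nonempty k]
    {A : Matrix k k ℝ} (hA : A.det ≠ 0) : 0 < lamMin (Aᵀ * A) := by
  have hherm : (Aᵀ * A).IsHermitian := by
    have := Matrix.isHermitian_conjTranspose_mul_self A
    rwa [my_real_conjTranspose] at this
  obtain ⟨v, hv, hAv⟩ := my_lamMin_mem hherm
  have h1 : v ⬝ᵥ ((Aᵀ * A) *ᵥ v) = (A *ᵥ v) ⬝ᵥ (A *ᵥ v) := by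
    rw [← Matrix.mulVec_mulVec, my_dot_mulVec_symm, transpose_transpose]
  have h2 : v ⬝ᵥ ((Aᵀ * A) *ᵥ v) = lamMin (Aᵀ * A) * (v ⬝ᵥ v) := by
    rw [hAv, dotProduct_smul]; simp
  have hvv : 0 < v ⬝ᵥ v := my_dot_self_pos hv
  have hAvv : 0 < (A *ᵥ v) ⬝ᵥ (A *ᵥ v) := my_dot_self_pos (my_mulVec_inj hA hv)
  have := h1 ▸ h2
  nlinarith


lemma my_Mmat_entry {n m p : ℕ} (A : Matrix (Fin n) (Fin n) ℝ) (B : Matrix (Fin n) (Fin m) ℝ)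
    (C : Matrix (Fin p) (Fin n) ℝ) (D : Matrix (Fin p) (Fin m) ℝ) (d : ℕ → ℝ)
    (i : Fin p) (jl : Fin (n + 1) × Fin m) :
    Mmat A B C D d i jl
      = ∑ a : Fin (n + 1), Dbar n d a jl.1 * Markov A B C D (a : ℕ) i jl.2 := by
  obtain ⟨j, l⟩ := jl
  have hj : (j : ℕ) ≤ n := Nat.lt_succ_iff.mp j.isLt
  have hLHS : Mmat A B C D d i (j, l)
      = ∑ q ∈ Finset.range (n - (j : ℕ) + 1), d (n - (j : ℕ) - q) * Markov A B C D q i l := by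
    simp [Mmat, Matrix.sum_apply, smul_eq_mul]
  set F : ℕ → ℝ :=
    fun q => (if q + (j : ℕ) ≤ n then d (n - q - (j : ℕ)) else 0) * Markov A B C D q i l with hF
  calc Mmat A B C D d i (j, l)
      = ∑ q ∈ Finset.range (n - (j : ℕ) + 1), d (n - (j : ℕ) - q) * Markov A B C D q i l := hLHS
    _ = ∑ q ∈ Finset.range (n - (j : ℕ) + 1), F q := by
        refine Finset.sum_congr rfl fun q hq => ?_
        rw [Finset.mem_range] at hq
        rw [hF]
        dsimp only
        rw [if_pos (by omega)]
        have harg : n - (j : ℕ) - q = n - q - (j : ℕ) := by omega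
        rw [harg]
    _ = ∑ q ∈ Finset.range (n + 1), F q := by
        refine Finset.sum_subset (Finset.range_subset_range.mpr (by omega)) fun q hq hq' => ?_
        rw [Finset.mem_range] at hq
        rw [Finset.mem_range] at hq'
        rw [hF]
        dsimp only
        rw [if_neg (by omega), zero_mul]
    _ = ∑ a : Fin (n + 1), F (a : ℕ) := (Fin.sum_univ_eq_sum_range F (n + 1)).symm
    _ = ∑ a : Fin (n + 1), Dbar n d a j * Markov A B C D (a : ℕ) i l :=
        Finset.sum_congr rfl fun a _ => rfl

/-- `M K_u Mᵀ ⪰ λ_min(K_u) σ_min(D̄)² Γ Γᵀ`, and `σ_min(D̄) > 0` since `d_0 ≠ 0`. -/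
theorem stmt_9 {n m p : ℕ} (hn : 0 < n) (hm : 0 < m) (hp : 0 < p)
    (A : Matrix (Fin n) (Fin n) ℝ) (B : Matrix (Fin n) (Fin m) ℝ)
    (C : Matrix (Fin p) (Fin n) ℝ) (D : Matrix (Fin p) (Fin m) ℝ)
    (d : ℕ → ℝ) (hd0 : d 0 ≠ 0)
    (hdnorm : ∑ j ∈ Finset.range (n + 1), d j ^ 2 = 1)
    (Ku : Matrix (Fin (n + 1) × Fin m) (Fin (n + 1) × Fin m) ℝ) (hKu : Ku.PosDef) :
    (Mmat A B C D d * Ku * (Mmat A B C D d)ᴴ -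
        (lamMin Ku * sigmaMin (Dbar n d) ^ 2) •
          (Gammamat A B C D * (Gammamat A B C D)ᴴ)).PosSemidef ∧
      0 < sigmaMin (Dbar n d) := by
  classical
  have hdet : (Dbar n d).det ≠ 0 := my_det_Dbar hd0
  have hDDpos : 0 < lamMin ((Dbar n d)ᵀ * Dbar n d) := my_lamMin_ATA_pos hdet
  have hsig2 : sigmaMin (Dbar n d) ^ 2 = lamMin ((Dbar n d)ᵀ * Dbar n d) := by
    rw [sigmaMin, my_real_conjTranspose, Real.sq_sqrt hDDpos.le]
  have hsigpos : 0 < sigmaMin (Dbar n d) := by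
    rw [sigmaMin, my_real_conjTranspose]; exact Real.sqrt_pos.mpr hDDpos
  have hswap : lamMin (Dbar n d * (Dbar n d)ᵀ) = lamMin ((Dbar n d)ᵀ * Dbar n d) := by
    unfold lamMin; rw [my_eigSet_swap hdet]
  have hne : Nonempty (Fin (n + 1) × Fin m) := ⟨(0, ⟨0, hm⟩)⟩
  have hKherm : Ku.IsHermitian := hKu.1
  have hKpos : 0 < lamMin Ku := by
    obtain ⟨v, hv, hAv⟩ := my_lamMin_mem hKherm
    have h2 : v ⬝ᵥ (Ku *ᵥ v) = lamMin Ku * (v ⬝ᵥ v) := by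
      rw [hAv, dotProduct_smul]; simp
    have h3 : 0 < v ⬝ᵥ (Ku *ᵥ v) := by simpa using (Matrix.posDef_iff_dotProduct_mulVec.mp hKu).2 hv
    have hvv := my_dot_self_pos hv
    nlinarith
  have hDDherm : (Dbar n d * (Dbar n d)ᵀ).IsHermitian := by
    have := Matrix.isHermitian_mul_conjTranspose_self (Dbar n d)
    rwa [my_real_conjTranspose] at this
  refine ⟨Matrix.posSemidef_iff_dotProduct_mulVec.mpr ⟨?_, ?_⟩, hsigpos⟩
  · -- Hermitian part
    apply Matrix.IsHermitian.sub
    · exact Matrix.isHermitian_mul_mul_conjTranspose _ hKherm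
    · have hGG : (Gammamat A B C D * (Gammamat A B C D)ᴴ).IsHermitian :=
        Matrix.isHermitian_mul_conjTranspose_self _
      unfold Matrix.IsHermitian
      rw [Matrix.conjTranspose_smul, hGG]
      congr 1
  · -- quadratic form
    intro x
    rw [star_trivial]
    set Mm := Mmat A B C D d with hMm
    set Γm := Gammamat A B C D with hΓm
    set w : Fin (n + 1) × Fin m → ℝ := x ᵥ* Mm with hw
    set g : Fin (n + 1) × Fin m → ℝ := x ᵥ* Γm with hg
    have hgentry : ∀ al : Fin (n + 1) × Fin m,
        g al = ∑ i : Fin p, x i * Markov A B C D (al.1 : ℕ) i al.2 := by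
      intro al
      rw [hg]
      simp [Matrix.vecMul, dotProduct, hΓm, Gammamat]
    have hwentry : ∀ jl : Fin (n + 1) × Fin m,
        w jl = ∑ a : Fin (n + 1), Dbar n d a jl.1 * g (a, jl.2) := by
      intro jl
      rw [hw]
      have : (x ᵥ* Mm) jl = ∑ i : Fin p, x i * Mm i jl := by
        simp [Matrix.vecMul, dotProduct]
      rw [this]
      calc ∑ i : Fin p, x i * Mm i jl
          = ∑ i : Fin p, ∑ a : Fin (n + 1),
              x i * (Dbar n d a jl.1 * Markov A B C D (a : ℕ) i jl.2) := by
            refine Finset.sum_congr rfl fun i _ => ?_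
            rw [hMm, my_Mmat_entry, Finset.mul_sum]
        _ = ∑ a : Fin (n + 1), ∑ i : Fin p,
              x i * (Dbar n d a jl.1 * Markov A B C D (a : ℕ) i jl.2) := Finset.sum_comm
        _ = ∑ a : Fin (n + 1), Dbar n d a jl.1 * g (a, jl.2) := by
            refine Finset.sum_congr rfl fun a _ => ?_
            rw [hgentry (a, jl.2), Finset.mul_sum]
            exact Finset.sum_congr rfl fun i _ => by ring
    have hq1 : x ⬝ᵥ ((Mm * Ku * Mmᴴ) *ᵥ x) = w ⬝ᵥ (Ku *ᵥ w) := by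
      rw [my_real_conjTranspose, ← Matrix.mulVec_mulVec, ← Matrix.mulVec_mulVec,
        my_dot_mulVec_symm, mulVec_transpose]
    have hq2 : x ⬝ᵥ ((Γm * Γmᴴ) *ᵥ x) = g ⬝ᵥ g := by
      rw [my_real_conjTranspose, ← Matrix.mulVec_mulVec, my_dot_mulVec_symm, mulVec_transpose]
    -- the key lower bound on w ⬝ᵥ w
    have hww : lamMin (Dbar n d * (Dbar n d)ᵀ) * (g ⬝ᵥ g) ≤ w ⬝ᵥ w := by
      have hsplitw : w ⬝ᵥ w
          = ∑ l₀ : Fin m, ∑ j₀ : Fin (n + 1), w (j₀, l₀) * w (j₀, l₀) := by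
        rw [dotProduct]
        rw [Fintype.sum_prod_type]
        exact Finset.sum_comm
      have hsplitg : g ⬝ᵥ g
          = ∑ l₀ : Fin m, ∑ a : Fin (n + 1), g (a, l₀) * g (a, l₀) := by
        rw [dotProduct]
        rw [Fintype.sum_prod_type]
        exact Finset.sum_comm
      rw [hsplitw, hsplitg, Finset.mul_sum]
      apply Finset.sum_le_sum
      intro l₀ _
      set gl : Fin (n + 1) → ℝ := fun a => g (a, l₀) with hgl
      have hwl : ∀ j₀ : Fin (n + 1), w (j₀, l₀) = ((Dbar n d)ᵀ *ᵥ gl) j₀ := by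
        intro j₀
        rw [hwentry (j₀, l₀)]
        simp [Matrix.mulVec, dotProduct, Matrix.transpose_apply, hgl]
      have hsum : ∑ j₀ : Fin (n + 1), w (j₀, l₀) * w (j₀, l₀)
          = gl ⬝ᵥ ((Dbar n d * (Dbar n d)ᵀ) *ᵥ gl) := by
        have h1 : ∑ j₀ : Fin (n + 1), w (j₀, l₀) * w (j₀, l₀)
            = ((Dbar n d)ᵀ *ᵥ gl) ⬝ᵥ ((Dbar n d)ᵀ *ᵥ gl) := by
          rw [dotProduct]
          exact Finset.sum_congr rfl fun j₀ _ => by rw [hwl j₀]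
        rw [h1, my_dot_mulVec_symm, transpose_transpose, Matrix.mulVec_mulVec,
          dotProduct_comm]
      rw [hsum]
      have hr := my_rayleigh hDDherm gl
      have : lamMin (Dbar n d * (Dbar n d)ᵀ) * (gl ⬝ᵥ gl)
          = lamMin (Dbar n d * (Dbar n d)ᵀ) * ∑ a : Fin (n + 1), g (a, l₀) * g (a, l₀) := by
        rw [dotProduct]
      rw [← this]
      exact hr
    have hKw : lamMin Ku * (w ⬝ᵥ w) ≤ w ⬝ᵥ (Ku *ᵥ w) := my_rayleigh hKherm w
    have hgg : 0 ≤ g ⬝ᵥ g := by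
      rw [dotProduct]; exact Finset.sum_nonneg fun i _ => mul_self_nonneg _
    rw [Matrix.sub_mulVec, dotProduct_sub, Matrix.smul_mulVec, dotProduct_smul,
      hq1, hq2, smul_eq_mul, hsig2, ← hswap]
    nlinarith [mul_le_mul_of_nonneg_left hww hKpos.le]
end

section
/- For every symmetric positive definite K_u ∈ ℝ^{m(n+1)×m(n+1)}, the matrix inequality M K_u M^T ⪰ λ_min(Γ̄ K_u Γ̄^T) · I_p holds in the Loewner order, where λ_min denotes the minimum eigenvalue. -/
open Matrix Finset

/-- Block lower-triangular Toeplitz matrix `Γ̄` with `(i,j)`-block `Γ_{i-j}` for `j ≤ i`. -/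
noncomputable def Gammabar {n m p : ℕ} (A : Matrix (Fin n) (Fin n) ℝ) (B : Matrix (Fin n) (Fin m) ℝ)
    (C : Matrix (Fin p) (Fin n) ℝ) (D : Matrix (Fin p) (Fin m) ℝ) :
    Matrix (Fin (n + 1) × Fin p) (Fin (n + 1) × Fin m) ℝ :=
  Matrix.of fun ir jl =>
    if (jl.1 : ℕ) ≤ (ir.1 : ℕ) then Markov A B C D ((ir.1 : ℕ) - (jl.1 : ℕ)) ir.2 jl.2 else 0

lemma key {k : Type} [Fintype k] [DecidableEq k] [Nonempty k] {S : Matrix k k ℝ}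
    (hS : S.IsHermitian) : (S - lamMin S • 1).PosSemidef := by
  set μ : ℝ := Finset.univ.inf' Finset.univ_nonempty hS.eigenvalues with hμ
  have hev : ∀ i, μ ≤ hS.eigenvalues i := fun i =>
    Finset.inf'_le _ (Finset.mem_univ i)
  -- Step A : S - μ • 1 is PSD
  have hA : (S - μ • 1).PosSemidef := by
    have hU : (hS.eigenvectorUnitary : Matrix k k ℝ) * star (hS.eigenvectorUnitary : Matrix k k ℝ) = 1 :=
      Matrix.mem_unitaryGroup_iff.mp hS.eigenvectorUnitary.2
    have h1 : S - μ • 1 = (hS.eigenvectorUnitary : Matrix k k ℝ) *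
        Matrix.diagonal (fun i => hS.eigenvalues i - μ) *
        (hS.eigenvectorUnitary : Matrix k k ℝ)ᴴ := by
      conv_lhs => rw [hS.spectral_theorem, ← hU]
      rw [RCLike.ofReal_real_eq_id]
      rw [← Matrix.star_eq_conjTranspose]
      have : (Matrix.diagonal (fun i => hS.eigenvalues i - μ)) =
          Matrix.diagonal (id ∘ hS.eigenvalues) - μ • 1 := by
        rw [Matrix.smul_one_eq_diagonal, ← Matrix.diagonal_sub]; rfl
      rw [this, Matrix.mul_sub, Matrix.sub_mul, Matrix.mul_smul, Matrix.mul_one, Matrix.smul_mul]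
      rfl
    rw [h1]
    exact (Matrix.posSemidef_diagonal_iff.mpr (fun i => sub_nonneg.mpr (hev i))).mul_mul_conjTranspose_same _
  -- Step B : μ is a lower bound for eigSet S
  have hlb : ∀ t ∈ eigSet S, μ ≤ t := by
    rintro t ⟨v, hv, hvec⟩
    have h2 := hA.dotProduct_mulVec_nonneg v
    have h3 : (S - μ • 1) *ᵥ v = (t - μ) • v := by
      rw [Matrix.sub_mulVec, hvec, Matrix.smul_mulVec, Matrix.one_mulVec, sub_smul]
    rw [h3] at h2
    have h4 : star v ⬝ᵥ (t - μ) • v = (t - μ) * (star v ⬝ᵥ v) := by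
      simp [dotProduct_smul]
    rw [h4] at h2
    have h5 : 0 < star v ⬝ᵥ v := Matrix.dotProduct_star_self_pos_iff.mpr hv |>.trans_eq (by simp [dotProduct_comm])
    nlinarith [h2, h5]
  have hmem : μ ∈ eigSet S := by
    obtain ⟨i₀, _, hi₀⟩ := Finset.exists_mem_eq_inf' (Finset.univ_nonempty) hS.eigenvalues
    refine ⟨⇑(hS.eigenvectorBasis i₀), ?_, ?_⟩
    · exact fun h => hS.eigenvectorBasis.orthonormal.ne_zero i₀ (by ext k; simpa using congrFun h k)
    · rw [hμ, hi₀]; exact hS.mulVec_eigenvectorBasis i₀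
  have hlam : lamMin S = μ :=
    le_antisymm (csInf_le ⟨μ, hlb⟩ hmem) (le_csInf ⟨μ, hmem⟩ hlb)
  rw [hlam]; exact hA


noncomputable def Emat (n p : ℕ) (d : ℕ → ℝ) : Matrix (Fin p) (Fin (n + 1) × Fin p) ℝ :=
  Matrix.of fun i rs => if rs.2 = i then d (n - (rs.1 : ℕ)) else 0

lemma Mmat_eq {n m p : ℕ} (A : Matrix (Fin n) (Fin n) ℝ) (B : Matrix (Fin n) (Fin m) ℝ)
    (C : Matrix (Fin p) (Fin n) ℝ) (D : Matrix (Fin p) (Fin m) ℝ) (d : ℕ → ℝ) :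
    Mmat A B C D d = Emat n p d * Gammabar A B C D := by
  ext i jl
  obtain ⟨j, l⟩ := jl
  simp only [Mmat, Emat, Gammabar, Matrix.mul_apply, Matrix.of_apply,
    Fintype.sum_prod_type, Matrix.sum_apply, Matrix.smul_apply, smul_eq_mul,
    ite_mul, zero_mul]
  rw [Finset.sum_comm]
  rw [Finset.sum_eq_single i (fun b _ hb => by simp [hb]) (by simp)]
  simp only [if_true]
  rw [Fin.sum_univ_eq_sum_range (fun r => d (n - r) *
      (if (j : ℕ) ≤ r then Markov A B C D (r - (j : ℕ)) i l else 0)) (n + 1)]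
  rw [Finset.range_eq_Ico, Finset.range_eq_Ico,
    ← Finset.sum_Ico_consecutive _ (Nat.zero_le (j : ℕ))
      (show (j : ℕ) ≤ n + 1 from le_of_lt j.isLt)]
  have h1 : ∑ r ∈ Finset.Ico 0 (j : ℕ), d (n - r) *
      (if (j : ℕ) ≤ r then Markov A B C D (r - (j : ℕ)) i l else 0) = 0 := by
    apply Finset.sum_eq_zero
    intro r hr
    rw [Finset.mem_Ico] at hr
    rw [if_neg (by omega), mul_zero]
  rw [h1, zero_add, Finset.sum_Ico_eq_sum_range, Finset.sum_Ico_eq_sum_range]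
  have hj : (j : ℕ) ≤ n := Nat.le_of_lt_succ j.isLt
  have h2 : n + 1 - (j : ℕ) = n - (j : ℕ) + 1 := by omega
  simp only [Nat.sub_zero, Nat.zero_add, zero_add]
  rw [h2]
  apply Finset.sum_congr rfl
  intro q hq
  rw [if_pos (Nat.le_add_right _ _)]
  congr 2 <;> omega

lemma Emat_mul_conjTranspose {n p : ℕ} (d : ℕ → ℝ)
    (hdnorm : ∑ j ∈ Finset.range (n + 1), d j ^ 2 = 1) :
    Emat n p d * (Emat n p d)ᴴ = 1 := by
  ext i i'
  simp only [Emat, Matrix.mul_apply, Matrix.conjTranspose_apply, Matrix.of_apply,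
    Fintype.sum_prod_type, star_trivial]
  by_cases h : i' = i
  · subst h
    rw [Matrix.one_apply_eq]
    have hrow : ∀ r : Fin (n + 1), (∑ s : Fin p,
        (if s = i' then d (n - (r : ℕ)) else 0) * (if s = i' then d (n - (r : ℕ)) else 0))
        = d (n - (r : ℕ)) ^ 2 := fun r => by
      rw [Finset.sum_eq_single i' (fun b _ hb => by simp [hb]) (by simp)]
      simp [sq]
    rw [Finset.sum_congr rfl (fun r _ => hrow r), Fin.sum_univ_eq_sum_range (fun t => d (n - t) ^ 2) (n + 1),
      ← Finset.sum_range_reflect]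
    refine (Finset.sum_congr rfl fun x hx => ?_).trans hdnorm
    have hx' := Finset.mem_range.mp hx
    have he : n - (n + 1 - 1 - x) = x := by omega
    rw [he]
  · rw [Matrix.one_apply_ne' h]
    apply Finset.sum_eq_zero
    intro r _
    apply Finset.sum_eq_zero
    intro s _
    by_cases hs : s = i <;> by_cases hs' : s = i' <;> simp_all

/-- `M K_u Mᵀ ⪰ λ_min(Γ̄ K_u Γ̄ᵀ) I_p`. -/
theorem stmt_10 {n m p : ℕ} (hn : 0 < n) (hm : 0 < m) (hp : 0 < p)
    (A : Matrix (Fin n) (Fin n) ℝ) (B : Matrix (Fin n) (Fin m) ℝ)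
    (C : Matrix (Fin p) (Fin n) ℝ) (D : Matrix (Fin p) (Fin m) ℝ)
    (d : ℕ → ℝ) (hd0 : d 0 ≠ 0)
    (hdnorm : ∑ j ∈ Finset.range (n + 1), d j ^ 2 = 1)
    (Ku : Matrix (Fin (n + 1) × Fin m) (Fin (n + 1) × Fin m) ℝ) (hKu : Ku.PosDef) :
    (Mmat A B C D d * Ku * (Mmat A B C D d)ᴴ -
        lamMin (Gammabar A B C D * Ku * (Gammabar A B C D)ᴴ) •
          (1 : Matrix (Fin p) (Fin p) ℝ)).PosSemidef := by
  haveI : Nonempty (Fin (n + 1) × Fin p) := ⟨(0, ⟨0, hp⟩)⟩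
  set G := Gammabar A B C D with hG
  set S := G * Ku * Gᴴ with hS
  have hSpsd : S.PosSemidef := hKu.posSemidef.mul_mul_conjTranspose_same G
  have hkey : (S - lamMin S • 1).PosSemidef := key hSpsd.1
  have hfact : Emat n p d * (S - lamMin S • (1 : Matrix (Fin (n + 1) × Fin p) (Fin (n + 1) × Fin p) ℝ)) * (Emat n p d)ᴴ =
      Mmat A B C D d * Ku * (Mmat A B C D d)ᴴ - lamMin S • (1 : Matrix (Fin p) (Fin p) ℝ) := by
    rw [Mmat_eq A B C D d, Matrix.conjTranspose_mul, Matrix.mul_sub, Matrix.sub_mul,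
      Matrix.mul_smul, Matrix.mul_one, Matrix.smul_mul, Emat_mul_conjTranspose d hdnorm]
    congr 1
    simp only [hS, hG, Matrix.mul_assoc]
  rw [← hfact]
  exact hkey.mul_mul_conjTranspose_same _
end

section
/- Suppose the first r Markov parameters vanish: Γ_i = 0 for i = 0,…,r−1 (with 0 ≤ r ≤ n). Then for every input sequence {u_k} and every k ≥ n, M u_{[k−n,k]} = M̄_r u_{[k−n,k−r]}, where M̄_r = (d̄_r^T ⊗ I_p) Γ̄_r. -/
open Matrix Kronecker Finset

/-- Block lower-triangular Toeplitz matrix `Γ̄_r` with `(i,j)`-block `Γ_{r+i-j}` for `j ≤ i`. -/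
noncomputable def Gammabarr {n m p : ℕ} (A : Matrix (Fin n) (Fin n) ℝ) (B : Matrix (Fin n) (Fin m) ℝ)
    (C : Matrix (Fin p) (Fin n) ℝ) (D : Matrix (Fin p) (Fin m) ℝ) (r : ℕ) :
    Matrix (Fin (n + 1 - r) × Fin p) (Fin (n + 1 - r) × Fin m) ℝ :=
  Matrix.of fun ir jl =>
    if (jl.1 : ℕ) ≤ (ir.1 : ℕ) then Markov A B C D (r + (ir.1 : ℕ) - (jl.1 : ℕ)) ir.2 jl.2 else 0

/-- `M̄_r = (d̄_rᵀ ⊗ I_p) Γ̄_r`, where `d̄_r = (d_{n-r}, …, d_1, d_0)`. -/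
noncomputable def Mbarr {n m p : ℕ} (A : Matrix (Fin n) (Fin n) ℝ) (B : Matrix (Fin n) (Fin m) ℝ)
    (C : Matrix (Fin p) (Fin n) ℝ) (D : Matrix (Fin p) (Fin m) ℝ) (d : ℕ → ℝ) (r : ℕ) :
    Matrix (Fin p) (Fin (n + 1 - r) × Fin m) ℝ :=
  ((((Matrix.of fun (_ : Fin 1) (i : Fin (n + 1 - r)) => d (n - r - (i : ℕ))) ⊗ₖ
      (1 : Matrix (Fin p) (Fin p) ℝ)) * Gammabarr A B C D r).submatrix
    (fun i : Fin p => ((0 : Fin 1), i)) id)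

/-- if `Γ_i = 0` for `i = 0,…,r-1`, then for every input `u` and every `k ≥ n`,
`M u_{[k-n,k]} = M̄_r u_{[k-n,k-r]}`. -/
theorem stmt_11 {n m p : ℕ} (hn : 0 < n) (hm : 0 < m) (hp : 0 < p)
    (A : Matrix (Fin n) (Fin n) ℝ) (B : Matrix (Fin n) (Fin m) ℝ)
    (C : Matrix (Fin p) (Fin n) ℝ) (D : Matrix (Fin p) (Fin m) ℝ)
    (d : ℕ → ℝ) (hd0 : d 0 ≠ 0)
    (hdnorm : ∑ j ∈ Finset.range (n + 1), d j ^ 2 = 1)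
    (r : ℕ) (hr : r ≤ n)
    (hvanish : ∀ i < r, Markov A B C D i = 0) :
    ∀ (u : ℕ → Fin m → ℝ) (k : ℕ), n ≤ k →
      (Mmat A B C D d).mulVec (fun il : Fin (n + 1) × Fin m => u (k - n + (il.1 : ℕ)) il.2) =
        (Mbarr A B C D d r).mulVec
          (fun il : Fin (n + 1 - r) × Fin m => u (k - n + (il.1 : ℕ)) il.2) := by
  intro u k hk
  funext i
  simp only [Matrix.mulVec, dotProduct, Mmat, Mbarr, Gammabarr, Matrix.submatrix_apply,
    Matrix.mul_apply, Matrix.kroneckerMap_apply, Matrix.of_apply, Matrix.one_apply,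
    Fintype.sum_prod_type, Matrix.sum_apply, Matrix.smul_apply, smul_eq_mul, id]
  simp only [ite_mul, mul_ite, mul_zero, zero_mul, mul_one, Finset.sum_ite_irrel, Finset.sum_const_zero, Finset.sum_ite_eq,
    Finset.mem_univ, if_true]
  rw [Fin.sum_univ_eq_sum_range (fun j => ∑ l : Fin m,
      (∑ q ∈ Finset.range (n - j + 1), d (n - j - q) * Markov A B C D q i l) * u (k - n + j) l),
    Fin.sum_univ_eq_sum_range (fun j => ∑ l : Fin m,
      (∑ a : Fin (n + 1 - r), if j ≤ (a : ℕ) then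
        d (n - r - (a : ℕ)) * Markov A B C D (r + (a : ℕ) - j) i l else 0) * u (k - n + j) l)]
  have hsub : Finset.range (n + 1 - r) ⊆ Finset.range (n + 1) := Finset.range_subset_range.mpr (by omega)
  rw [← Finset.sum_subset hsub (fun j hj hj' => ?_)]
  · -- matching terms for j < n + 1 - r
    refine Finset.sum_congr rfl fun j hj => Finset.sum_congr rfl fun l _ => ?_
    simp only [Finset.mem_range] at hj
    congr 1
    rw [Fin.sum_univ_eq_sum_range (fun a => if j ≤ a then
        d (n - r - a) * Markov A B C D (r + a - j) i l else 0), ← Finset.sum_filter]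
    have hfil : (Finset.range (n + 1 - r)).filter (fun a => j ≤ a) = Finset.Ico j (n + 1 - r) := by
      ext a; simp [Finset.mem_filter, Finset.mem_Ico, and_comm]
    rw [hfil]
    have hLHS : ∑ q ∈ Finset.range (n - j + 1), d (n - j - q) * Markov A B C D q i l
        = ∑ q ∈ Finset.Ico r (n - j + 1), d (n - j - q) * Markov A B C D q i l := by
      rw [Finset.range_eq_Ico]
      refine (Finset.sum_subset (Finset.Ico_subset_Ico (Nat.zero_le r) le_rfl)
        (fun q hq hq' => ?_)).symm
      simp only [Finset.mem_Ico] at hq hq'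
      have : q < r := by omega
      rw [hvanish q this]
      simp
    rw [hLHS, Finset.sum_Ico_eq_sum_range, Finset.sum_Ico_eq_sum_range]
    have hrange : n - j + 1 - r = n + 1 - r - j := by omega
    rw [hrange]
    refine Finset.sum_congr rfl fun t ht => ?_
    simp only [Finset.mem_range] at ht
    congr 2 <;> omega
  · -- vanishing tail terms
    simp only [Finset.mem_range] at hj hj'
    refine Finset.sum_eq_zero fun l _ => ?_
    have : ∑ q ∈ Finset.range (n - j + 1), d (n - j - q) * Markov A B C D q i l = 0 := by
      refine Finset.sum_eq_zero fun q hq => ?_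
      simp only [Finset.mem_range] at hq
      have : q < r := by omega
      rw [hvanish q this]
      simp
    rw [this, zero_mul]
end

section
/- Let {u_k}_{k=0}^{N−1} be an input sequence, x_0 ∈ ℝ^n an initial state, {x_k} the resulting state sequence and {y_k} the resulting output sequence, and let 1 ≤ L ≤ N. If the stacked matrix [H_1(x_{[0,N−L]}); H_L(u)] (whose k-th column is (x_k; u_{[k,k+L−1]}) for k = 0,…,N−L) has rank mL + n, then the column image of the stacked matrix [H_L(u); H_L(y)] equals the set 𝒯_L of all length-L input-output trajectories of the system. -/
open Matrix Finset

/-- The set `𝒯_L` of length-`L` input-output trajectories of the system: stacked vectors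
`(ū; ȳ)` such that `ȳ` is generated by the system from some initial state under input `ū`. -/
def TrajSet {n m p : ℕ} (A : Matrix (Fin n) (Fin n) ℝ) (B : Matrix (Fin n) (Fin m) ℝ)
    (C : Matrix (Fin p) (Fin n) ℝ) (D : Matrix (Fin p) (Fin m) ℝ) (L : ℕ) :
    Set ((Fin L × Fin m) ⊕ (Fin L × Fin p) → ℝ) :=
  {w | ∃ (xb : Fin n → ℝ) (ub : ℕ → Fin m → ℝ),
      (∀ (i : Fin L) (l : Fin m), w (Sum.inl (i, l)) = ub (i : ℕ) l) ∧
      (∀ (i : Fin L) (j : Fin p), w (Sum.inr (i, j)) = outputSeq A B C D xb ub (i : ℕ) j)}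

lemma stateSeq_shift {n m : ℕ} (A : Matrix (Fin n) (Fin n) ℝ) (B : Matrix (Fin n) (Fin m) ℝ)
    (x0 : Fin n → ℝ) (u : ℕ → Fin m → ℝ) (k : ℕ) : ∀ i,
    stateSeq A B x0 u (k + i) = stateSeq A B (stateSeq A B x0 u k) (fun j => u (k + j)) i := by
  intro i
  induction i with
  | zero => rfl
  | succ i ih => simp [stateSeq, ih]

lemma mulVec_sum_smul {a b K : ℕ} [Fintype (Fin K)] (M : Matrix (Fin a) (Fin b) ℝ)
    (c : Fin K → ℝ) (v : Fin K → Fin b → ℝ) :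
    M.mulVec (∑ k, c k • v k) = ∑ k, c k • M.mulVec (v k) := by
  simp [Matrix.mulVec_sum, Matrix.mulVec_smul]

lemma stateSeq_lin {n m K : ℕ} (A : Matrix (Fin n) (Fin n) ℝ) (B : Matrix (Fin n) (Fin m) ℝ)
    (c : Fin K → ℝ) (X : Fin K → Fin n → ℝ) (U : Fin K → ℕ → Fin m → ℝ) (i : ℕ) :
    stateSeq A B (∑ k, c k • X k) (fun j => ∑ k, c k • U k j) i
      = ∑ k, c k • stateSeq A B (X k) (U k) i := by
  induction i with
  | zero => rfl
  | succ i ih =>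
      show A.mulVec _ + B.mulVec _ = _
      rw [ih, mulVec_sum_smul, mulVec_sum_smul, ← Finset.sum_add_distrib]
      simp [stateSeq, smul_add]

lemma outputSeq_lin {n m p K : ℕ} (A : Matrix (Fin n) (Fin n) ℝ) (B : Matrix (Fin n) (Fin m) ℝ)
    (C : Matrix (Fin p) (Fin n) ℝ) (D : Matrix (Fin p) (Fin m) ℝ)
    (c : Fin K → ℝ) (X : Fin K → Fin n → ℝ) (U : Fin K → ℕ → Fin m → ℝ) (i : ℕ) :
    outputSeq A B C D (∑ k, c k • X k) (fun j => ∑ k, c k • U k j) i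
      = ∑ k, c k • outputSeq A B C D (X k) (U k) i := by
  unfold outputSeq
  rw [stateSeq_lin, mulVec_sum_smul, mulVec_sum_smul, ← Finset.sum_add_distrib]
  simp [smul_add]

lemma stateSeq_congr {n m : ℕ} (A : Matrix (Fin n) (Fin n) ℝ) (B : Matrix (Fin n) (Fin m) ℝ)
    (x0 : Fin n → ℝ) {u u' : ℕ → Fin m → ℝ} {i : ℕ} (h : ∀ j < i, u j = u' j) :
    stateSeq A B x0 u i = stateSeq A B x0 u' i := by
  induction i with
  | zero => rfl
  | succ i ih =>
      show A.mulVec _ + B.mulVec _ = A.mulVec _ + B.mulVec _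
      rw [ih (fun j hj => h j (Nat.lt_succ_of_lt hj)), h i (Nat.lt_succ_self i)]

lemma outputSeq_congr {n m p : ℕ} (A : Matrix (Fin n) (Fin n) ℝ) (B : Matrix (Fin n) (Fin m) ℝ)
    (C : Matrix (Fin p) (Fin n) ℝ) (D : Matrix (Fin p) (Fin m) ℝ)
    (x0 : Fin n → ℝ) {u u' : ℕ → Fin m → ℝ} {i : ℕ} (h : ∀ j ≤ i, u j = u' j) :
    outputSeq A B C D x0 u i = outputSeq A B C D x0 u' i := by
  unfold outputSeq
  rw [stateSeq_congr A B x0 (fun j hj => h j hj.le), h i le_rfl]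

lemma outputSeq_shift {n m p : ℕ} (A : Matrix (Fin n) (Fin n) ℝ) (B : Matrix (Fin n) (Fin m) ℝ)
    (C : Matrix (Fin p) (Fin n) ℝ) (D : Matrix (Fin p) (Fin m) ℝ)
    (x0 : Fin n → ℝ) (u : ℕ → Fin m → ℝ) (k i : ℕ) :
    outputSeq A B C D x0 u (k + i)
      = outputSeq A B C D (stateSeq A B x0 u k) (fun j => u (k + j)) i := by
  unfold outputSeq
  rw [stateSeq_shift]
lemma surj_of_rank_eq_card {a b : Type*} [Fintype a] [DecidableEq a] [Fintype b] [DecidableEq b]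
    (M : Matrix a b ℝ) (h : M.rank = Fintype.card a) : Function.Surjective M.mulVec := by
  have hr : LinearMap.range M.mulVecLin = ⊤ := by
    apply Submodule.eq_top_of_finrank_eq
    rw [show Module.finrank ℝ ↥(LinearMap.range M.mulVecLin) = M.rank from rfl, h,
      Module.finrank_pi]
  intro t
  obtain ⟨c, hc⟩ := LinearMap.range_eq_top.mp hr t
  exact ⟨c, by simpa using hc⟩

/-- if the stacked matrix `[H_1(x_{[0,N-L]}); H_L(u)]` has rank `mL + n`, then the
column image of `[H_L(u); H_L(y)]` equals the set `𝒯_L` of length-`L` trajectories. -/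
theorem stmt_13 {n m p : ℕ} (hn : 0 < n) (hm : 0 < m) (hp : 0 < p)
    (A : Matrix (Fin n) (Fin n) ℝ) (B : Matrix (Fin n) (Fin m) ℝ)
    (C : Matrix (Fin p) (Fin n) ℝ) (D : Matrix (Fin p) (Fin m) ℝ)
    (L N : ℕ) (hL : 1 ≤ L) (hLN : L ≤ N)
    (u : ℕ → Fin m → ℝ) (x0 : Fin n → ℝ)
    (hrank : (Matrix.of fun (i : Fin n ⊕ (Fin L × Fin m)) (k : Fin (N - L + 1)) =>
        Sum.elim (fun i' : Fin n => stateSeq A B x0 u (k : ℕ) i')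
          (fun il : Fin L × Fin m => u ((k : ℕ) + (il.1 : ℕ)) il.2) i).rank = m * L + n) :
    {v : (Fin L × Fin m) ⊕ (Fin L × Fin p) → ℝ |
        ∃ c : Fin (N - L + 1) → ℝ,
          (Matrix.of fun (i : (Fin L × Fin m) ⊕ (Fin L × Fin p)) (k : Fin (N - L + 1)) =>
            Sum.elim (fun il : Fin L × Fin m => u ((k : ℕ) + (il.1 : ℕ)) il.2)
              (fun ij : Fin L × Fin p =>
                outputSeq A B C D x0 u ((k : ℕ) + (ij.1 : ℕ)) ij.2) i).mulVec c = v} =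
      TrajSet A B C D L := by
  ext v
  simp only [Set.mem_setOf_eq, TrajSet]
  constructor
  · rintro ⟨c, rfl⟩
    refine ⟨∑ k, c k • stateSeq A B x0 u k, fun j => ∑ k, c k • u (k + j), ?_, ?_⟩
    · intro i l
      simp only [Matrix.mulVec, dotProduct, Matrix.of_apply, Sum.elim_inl,
        Finset.sum_apply, Pi.smul_apply, smul_eq_mul]
      exact Finset.sum_congr rfl fun k _ => mul_comm _ _
    · intro i j
      rw [outputSeq_lin]
      simp only [Matrix.mulVec, dotProduct, Matrix.of_apply, Sum.elim_inr,
        Finset.sum_apply, Pi.smul_apply, smul_eq_mul]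
      refine Finset.sum_congr rfl fun k _ => ?_
      rw [outputSeq_shift, mul_comm]
  · rintro ⟨xb, ub, hu, hy⟩
    have hsurj : Function.Surjective
        (Matrix.of fun (i : Fin n ⊕ (Fin L × Fin m)) (k : Fin (N - L + 1)) =>
          Sum.elim (fun i' : Fin n => stateSeq A B x0 u (k : ℕ) i')
            (fun il : Fin L × Fin m => u ((k : ℕ) + (il.1 : ℕ)) il.2) i).mulVec := by
      apply surj_of_rank_eq_card
      rw [hrank]
      simp [Fintype.card_sum, Fintype.card_prod]
      ring
    obtain ⟨c, hc⟩ := hsurj (Sum.elim xb fun il => ub il.1 il.2)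
    have hcx : ∀ r : Fin n, ∑ k : Fin (N - L + 1), stateSeq A B x0 u (k : ℕ) r * c k = xb r := by
      intro r
      have := congrFun hc (Sum.inl r)
      simpa [Matrix.mulVec, dotProduct] using this
    have hcu : ∀ (i : Fin L) (l : Fin m), ∑ k : Fin (N - L + 1), u ((k : ℕ) + (i : ℕ)) l * c k = ub (i : ℕ) l := by
      intro i l
      have := congrFun hc (Sum.inr (i, l))
      simpa [Matrix.mulVec, dotProduct] using this
    refine ⟨c, ?_⟩
    funext w
    rcases w with ⟨i, l⟩ | ⟨i, j⟩
    · rw [hu i l, ← hcu i l]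
      simp [Matrix.mulVec, dotProduct]
    · rw [hy i j]
      have hxb : (∑ k : Fin (N - L + 1), c k • stateSeq A B x0 u (k : ℕ)) = xb := by
        funext r
        rw [← hcx r]
        simp only [Finset.sum_apply, Pi.smul_apply, smul_eq_mul]
        exact Finset.sum_congr rfl fun k _ => mul_comm _ _
      have hub : outputSeq A B C D xb (fun j' => ∑ k : Fin (N - L + 1), c k • u ((k : ℕ) + j')) (i : ℕ)
          = outputSeq A B C D xb ub (i : ℕ) := by
        apply outputSeq_congr
        intro j' hj'
        have hjL : j' < L := lt_of_le_of_lt hj' i.isLt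
        funext l
        have := hcu ⟨j', hjL⟩ l
        simp only [Finset.sum_apply, Pi.smul_apply, smul_eq_mul]
        rw [← this]
        exact Finset.sum_congr rfl fun k _ => mul_comm _ _
      rw [← hub, ← hxb, outputSeq_lin]
      simp only [Matrix.mulVec, dotProduct, Matrix.of_apply, Sum.elim_inr,
        Finset.sum_apply, Pi.smul_apply, smul_eq_mul]
      refine Finset.sum_congr rfl fun k _ => ?_
      rw [outputSeq_shift, mul_comm]
end
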